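/- arXiv:1809.09902 — 10 statements merged into one kernel-verified Lean document; each statement's English description precedes it below -/
import Mathlib

section
/- Let (A, φ) be a Frobenius algebra, M a simple left A-module with annihilator A_M = {a ∈ A : aM = 0}, and γ ∈ A* a functional belonging to M (i.e., γ(A_M) = 0). Set γ* = φ⁻¹(γ). Then A_M · γ* = 0; consequently, for any left A-module N, the submodule A·γ*·N is M-homogeneous (a sum of submodules isomorphic to M). -/
/-- Let `(A, φ)` be a Frobenius algebra, `M` a simple left `A`-module and
`γ ∈ A*` a functional belonging to `M` (vanishing on the annihilator of `M`).  With
`γ* = φ⁻¹(γ)` one has `A_M · γ* = 0`; consequently for any left `A`-module `N` the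
submodule `A·γ*·N` is `M`-homogeneous, i.e. `A_M · (A·γ*·N) = 0`. -/
theorem frobenius_annihilator_kills_inverse
    {A : Type*} [Ring A] [Algebra ℂ A] [FiniteDimensional ℂ A]
    (φ : A ≃ₗ[ℂ] Module.Dual ℂ A)
    (hφ : ∀ a b x : A, φ (a * b) x = φ b (x * a))
    (M : Type*) [AddCommGroup M] [Module A M] [IsSimpleModule A M]
    (γ : Module.Dual ℂ A)
    (hγ : ∀ a : A, (∀ m : M, a • m = 0) → γ a = 0) :
    (∀ b : A, (∀ m : M, b • m = 0) → b * φ.symm γ = 0) ∧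
    (∀ (N : Type*) [AddCommGroup N] [Module A N],
      ∀ b : A, (∀ m : M, b • m = 0) →
        ∀ (a : A) (n : N), (b * (a * φ.symm γ)) • n = 0) := by
  have key : ∀ b : A, (∀ m : M, b • m = 0) → b * φ.symm γ = 0 := by
    intro b hb
    have : φ (b * φ.symm γ) = 0 := by
      ext x
      have h1 : φ (b * φ.symm γ) x = φ (φ.symm γ) (x * b) := hφ b (φ.symm γ) x
      rw [h1, φ.apply_symm_apply]
      have : ∀ m : M, (x * b) • m = 0 := by
        intro m; rw [mul_smul, hb m, smul_zero]
      simpa using hγ _ this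
    have := φ.injective (by simpa using this)
    simpa using this
  refine ⟨key, ?_⟩
  intro N _ _ b hb a n
  have hba : ∀ m : M, (b * a) • m = 0 := by
    intro m; rw [mul_smul]; exact hb _
  rw [← mul_assoc, key (b * a) hba, zero_smul]
end

section
/- Let (A, φ) be a Frobenius algebra, M and N simple left A-modules, and γ, μ ∈ A* functionals belonging to M and N respectively (i.e., vanishing on the respective annihilators). Set γ* = φ⁻¹(γ). If γ*·N ≠ 0, then M ≅ N. In particular, if μ(γ*) ≠ 0 then M ≅ N. -/
open LinearMap

set_option maxHeartbeats 1000000 in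
set_option synthInstance.maxHeartbeats 400000 in
theorem aux1 {R M N : Type*} {ι : Type*} [Ring R]
    [AddCommGroup M] [Module R M] [IsSimpleModule R M]
    [AddCommGroup N] [Module R N] [IsSimpleModule R N]
    [Fintype ι] [DecidableEq ι]
    (Q : Submodule R (ι → M)) (h : Q →ₗ[R] N) (hh : h ≠ 0) :
    Nonempty (M ≃ₗ[R] N) := by
  haveI hpi : IsSemisimpleModule R (ι → M) := by
    refine isSemisimpleModule_of_isSemisimpleModule_submodule'
      (p := fun i => LinearMap.range (LinearMap.single R (fun _ => M) i))
      (fun i => IsSemisimpleModule.range _) ?_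
    rw [eq_top_iff]
    intro x _
    rw [← Finset.univ_sum_single x]
    exact Submodule.sum_mem _ fun i _ =>
      Submodule.mem_iSup_of_mem i ⟨x i, rfl⟩
  have hex : ∃ S : Submodule R Q, IsSimpleModule R S ∧ ¬ S ≤ LinearMap.ker h := by
    by_contra hc
    push_neg at hc
    have : sSup { m : Submodule R Q | IsSimpleModule R m } ≤ LinearMap.ker h :=
      sSup_le fun S hS => hc S hS
    rw [IsSemisimpleModule.sSup_simples_eq_top, top_le_iff] at this
    exact hh (LinearMap.ker_eq_top.mp this)
  obtain ⟨S, hSsimple, hSker⟩ := hex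
  haveI := hSsimple
  -- the map S → N is nonzero, hence an iso by Schur
  have h2 : h.comp S.subtype ≠ 0 := by
    intro h0
    apply hSker
    intro s hs
    have := LinearMap.congr_fun h0 ⟨s, hs⟩
    simpa using this
  have e2 : S ≃ₗ[R] N :=
    LinearEquiv.ofBijective (h.comp S.subtype) (bijective_of_ne_zero (R := R) (M := S) (N := N) (f := h.comp S.subtype) h2)
  -- some coordinate projection S → M is nonzero
  have h3 : ∃ i : ι, ((LinearMap.proj i : (ι → M) →ₗ[R] M).comp
      (Q.subtype.comp S.subtype)) ≠ 0 := by
    by_contra hc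
    push_neg at hc
    haveI := IsSimpleModule.nontrivial R S
    obtain ⟨s, hs⟩ := exists_ne (0 : S)
    apply hs
    have hzero : ∀ i : ι, ((s : Q) : ι → M) i = 0 := fun i => by
      have := LinearMap.congr_fun (hc i) s
      simpa using this
    have : (s : Q) = 0 := Subtype.ext (funext hzero)
    exact Subtype.ext (by simpa using this)
  obtain ⟨i, hi⟩ := h3
  have e1 : S ≃ₗ[R] M :=
    LinearEquiv.ofBijective _ (bijective_of_ne_zero (R := R) (M := S) (N := M)
      (f := (LinearMap.proj i : (ι → M) →ₗ[R] M).comp (Q.subtype.comp S.subtype)) hi)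
  exact ⟨e1.symm.trans e2⟩

/-- Let `(A, φ)` be a Frobenius algebra, `M`, `N` simple left `A`-modules,
and `γ`, `μ` functionals belonging to `M`, `N` respectively.  Set `γ* = φ⁻¹(γ)`.
If `γ*·N ≠ 0` then `M ≅ N`; in particular if `μ(γ*) ≠ 0` then `M ≅ N`. -/
theorem frobenius_orthogonality
    {A : Type*} [Ring A] [Algebra ℂ A] [FiniteDimensional ℂ A]
    (φ : A ≃ₗ[ℂ] Module.Dual ℂ A)
    (hφ : ∀ a b x : A, φ (a * b) x = φ b (x * a))
    (M : Type*) [AddCommGroup M] [Module A M] [IsSimpleModule A M]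
    (N : Type*) [AddCommGroup N] [Module A N] [IsSimpleModule A N]
    (γ μ : Module.Dual ℂ A)
    (hγ : ∀ a : A, (∀ m : M, a • m = 0) → γ a = 0)
    (hμ : ∀ a : A, (∀ n : N, a • n = 0) → μ a = 0) :
    ((∃ n : N, φ.symm γ • n ≠ 0) → Nonempty (M ≃ₗ[A] N)) ∧
    (μ (φ.symm γ) ≠ 0 → Nonempty (M ≃ₗ[A] N)) := by
  classical
  set g : A := φ.symm γ with hg
  -- Step A : if a annihilates M then a * g = 0
  have stepA : ∀ a : A, (∀ m : M, a • m = 0) → a * g = 0 := by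
    intro a ha
    have : φ (a * g) = 0 := by
      ext x
      have h1 : φ (a * g) x = φ g (x * a) := hφ a g x
      have h2 : φ g = γ := φ.apply_symm_apply γ
      have h3 : ∀ m : M, (x * a) • m = 0 := fun m => by
        rw [mul_smul, ha m, smul_zero]
      simp [h1, h2, hγ _ h3]
    have := φ.injective (by simpa using this)
    simpa using this
  have key : (∃ n : N, g • n ≠ 0) → Nonempty (M ≃ₗ[A] N) := by
    rintro ⟨n₀, hn₀⟩
    -- annihilator of M annihilates N
    have hAnnN : ∀ a : A, (∀ m : M, a • m = 0) → ∀ n : N, a • n = 0 := by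
      let N' : Submodule A N :=
        { carrier := { n | ∀ a : A, (∀ m : M, a • m = 0) → a • n = 0 }
          add_mem' := fun {x y} hx hy a ha => by
            rw [smul_add, hx a ha, hy a ha, add_zero]
          zero_mem' := fun a _ => smul_zero a
          smul_mem' := fun c n hn a ha => by
            rw [smul_smul]
            refine hn (a * c) fun m => ?_
            rw [mul_smul, ha] }
      have hmem : g • n₀ ∈ N' := by
        intro a ha
        rw [smul_smul, stepA a ha, zero_smul]
      have : N' = ⊤ := by
        rcases eq_bot_or_eq_top N' with hbot | htop
        · exact absurd (hbot ▸ hmem) (by simpa using hn₀)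
        · exact htop
      intro a ha n
      exact (this ▸ Submodule.mem_top : n ∈ N') a ha
    -- Artinian: find finitely many elements of M whose common annihilator
    -- is contained in Ann M
    haveI : IsArtinian ℂ A := inferInstance
    haveI : IsArtinian A A := isArtinian_of_tower ℂ inferInstance
    set 𝒮 : Set (Submodule A A) :=
      { K | ∃ F : Finset M, K = F.inf fun m => LinearMap.ker (toSpanSingleton A M m) } with h𝒮
    obtain ⟨K, hK𝒮, hKmin⟩ := IsArtinian.set_has_minimal 𝒮 ⟨⊤, ∅, by simp⟩
    obtain ⟨F, hF⟩ := hK𝒮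
    have hKle : ∀ m : M, K ≤ LinearMap.ker (toSpanSingleton A M m) := by
      intro m
      have hmem : K ⊓ LinearMap.ker (toSpanSingleton A M m) ∈ 𝒮 :=
        ⟨insert m F, by rw [Finset.inf_insert, hF, inf_comm]⟩
      have hnotlt := hKmin _ hmem
      have : K ⊓ LinearMap.ker (toSpanSingleton A M m) = K :=
        by_contra fun hne => hnotlt (lt_of_le_of_ne inf_le_left hne)
      rw [← this]; exact inf_le_right
    -- the evaluation maps
    set Θ : A →ₗ[A] (F → M) := LinearMap.pi fun m : F => toSpanSingleton A M m.1 with hΘ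
    set q : A →ₗ[A] N := toSpanSingleton A N (g • n₀) with hq
    have hker : LinearMap.ker Θ ≤ LinearMap.ker q := by
      intro a haΘ
      have haK : a ∈ K := by
        rw [hF, Submodule.mem_finsetInf]
        intro m hm
        have := congrFun (LinearMap.mem_ker.mp haΘ) (⟨m, hm⟩ : F)
        simpa [LinearMap.mem_ker, hΘ] using this
      have haAnn : ∀ m : M, a • m = 0 := fun m => hKle m haK
      simp only [LinearMap.mem_ker, hq, toSpanSingleton_apply]
      exact hAnnN a haAnn _
    have hq1 : q 1 ≠ 0 := by simpa [hq] using hn₀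
    -- factor q through the range of Θ
    let h : LinearMap.range Θ →ₗ[A] N :=
      (Submodule.liftQ (LinearMap.ker Θ) q hker).comp
        (Θ.quotKerEquivRange).symm.toLinearMap
    have hh : h ≠ 0 := by
      intro h0
      apply hq1
      have : h ((Θ.quotKerEquivRange) (Submodule.Quotient.mk 1)) = q 1 := by
        simp [h]
      rw [h0] at this
      simpa using this.symm
    exact aux1 (LinearMap.range Θ) h hh
  refine ⟨key, fun hμγ => key ?_⟩
  by_contra hc
  push_neg at hc
  exact hμγ (hμ g hc)
end

section
/- Let (A, φ) be a Frobenius algebra, M and N simple left A-modules, and γ, μ ∈ A* functionals belonging to M and N respectively. Set γ* = φ⁻¹(γ), μ* = φ⁻¹(μ). If γ*·μ* ≠ 0 in A, then M ≅ N. -/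
section Aux

variable {A : Type*} [Ring A] [Algebra ℂ A]

/-- A simple `A`-module over a finite-dimensional `ℂ`-algebra admits a finite family
whose annihilation controls annihilation of the whole module. -/
private lemma exists_control [FiniteDimensional ℂ A]
    (M : Type*) [AddCommGroup M] [Module A M] [IsSimpleModule A M] :
    ∃ (k : ℕ) (s : Fin k → M), ∀ u : A, (∀ i, u • s i = 0) → ∀ m : M, u • m = 0 := by
  letI : Module ℂ M := Module.compHom M (algebraMap ℂ A)
  have hsmul : ∀ (c : ℂ) (m : M), c • m = (algebraMap ℂ A c) • m := fun _ _ => rfl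
  have : Nontrivial M := IsSimpleModule.nontrivial A M
  obtain ⟨m₀, hm₀⟩ := exists_ne (0 : M)
  let f : A →ₗ[ℂ] M :=
    { toFun := fun a => a • m₀
      map_add' := fun a b => add_smul a b m₀
      map_smul' := fun c a => by
        simp only [RingHom.id_apply, hsmul, Algebra.smul_def, mul_smul] }
  have hf : Function.Surjective f := IsSimpleModule.toSpanSingleton_surjective A hm₀
  have : Module.Finite ℂ M := Module.Finite.of_surjective f hf
  obtain ⟨k, s, hs⟩ := Module.Finite.exists_fin (R := ℂ) (M := M)
  refine ⟨k, s, fun u hu m => ?_⟩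
  have hm : m ∈ Submodule.span ℂ (Set.range s) := hs ▸ Submodule.mem_top
  induction hm using Submodule.span_induction with
  | mem x hx => obtain ⟨i, rfl⟩ := hx; exact hu i
  | zero => exact smul_zero u
  | add x y hx hy ihx ihy => rw [smul_add, ihx, ihy, add_zero]
  | smul c x hx ih =>
      rw [hsmul, ← mul_smul, ← Algebra.commutes c u, mul_smul, ih, smul_zero]

/-- If two simple modules are not isomorphic, there is an element of the algebra acting as
zero on the first and as the identity on the second. -/
private lemma exists_separating [FiniteDimensional ℂ A]
    (M : Type*) [AddCommGroup M] [Module A M] [IsSimpleModule A M]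
    (N : Type*) [AddCommGroup N] [Module A N] [IsSimpleModule A N]
    (hiso : ¬ Nonempty (M ≃ₗ[A] N)) :
    ∃ u : A, (∀ m : M, u • m = 0) ∧ (∀ n : N, (1 - u) • n = 0) := by
  obtain ⟨k, s, hsM⟩ := exists_control (A := A) M
  obtain ⟨l, t, htN⟩ := exists_control (A := A) N
  -- simple submodules covering `V := (Fin k → M) × (Fin l → N)`
  let ein : ∀ _ : Fin k, M →ₗ[A] (Fin k → M) × (Fin l → N) := fun i =>
    (LinearMap.inl A (Fin k → M) (Fin l → N)).comp (LinearMap.single A (fun _ => M) i)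
  let ejn : ∀ _ : Fin l, N →ₗ[A] (Fin k → M) × (Fin l → N) := fun j =>
    (LinearMap.inr A (Fin k → M) (Fin l → N)).comp (LinearMap.single A (fun _ => N) j)
  have hein : ∀ i, Function.Injective (ein i) := by
    intro i x y hxy
    have h1 : (ein i x).1 i = (ein i y).1 i := by rw [hxy]
    simpa [ein, LinearMap.coe_single] using h1
  have hejn : ∀ j, Function.Injective (ejn j) := by
    intro j x y hxy
    have h1 : (ejn j x).2 j = (ejn j y).2 j := by rw [hxy]
    simpa [ejn, LinearMap.coe_single] using h1
  let p : Fin k ⊕ Fin l → Submodule A ((Fin k → M) × (Fin l → N)) := fun i =>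
    Sum.elim (fun i => LinearMap.range (ein i)) (fun j => LinearMap.range (ejn j)) i
  have hpss : ∀ i, IsSemisimpleModule A ↥(p i) := by
    rintro (i | j)
    · show IsSemisimpleModule A ↥(LinearMap.range (ein i))
      haveI : IsSimpleModule A (LinearMap.range (ein i)) :=
        IsSimpleModule.congr (LinearEquiv.ofInjective (ein i) (hein i)).symm
      exact inferInstance
    · show IsSemisimpleModule A ↥(LinearMap.range (ejn j))
      haveI : IsSimpleModule A (LinearMap.range (ejn j)) :=
        IsSimpleModule.congr (LinearEquiv.ofInjective (ejn j) (hejn j)).symm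
      exact inferInstance
  have hptop : ⨆ i, p i = ⊤ := by
    rw [eq_top_iff]
    rintro ⟨x, y⟩ -
    have hx : ((x, 0) : (Fin k → M) × (Fin l → N)) ∈ ⨆ i, p i := by
      have hxsum : ((x, (0 : Fin l → N)) : (Fin k → M) × (Fin l → N))
          = ∑ i, ein i (x i) := by
        calc ((x, (0 : Fin l → N)) : (Fin k → M) × (Fin l → N))
            = LinearMap.inl A (Fin k → M) (Fin l → N) x := rfl
          _ = LinearMap.inl A (Fin k → M) (Fin l → N) (∑ i, Pi.single i (x i)) := by
              rw [Finset.univ_sum_single]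
          _ = ∑ i, ein i (x i) := by rw [map_sum]; rfl
      rw [hxsum]
      exact Submodule.sum_mem _ fun i _ => (le_iSup p (Sum.inl i)) ⟨x i, rfl⟩
    have hy : ((0, y) : (Fin k → M) × (Fin l → N)) ∈ ⨆ i, p i := by
      have hysum : (((0 : Fin k → M), y) : (Fin k → M) × (Fin l → N))
          = ∑ j, ejn j (y j) := by
        calc (((0 : Fin k → M), y) : (Fin k → M) × (Fin l → N))
            = LinearMap.inr A (Fin k → M) (Fin l → N) y := rfl
          _ = LinearMap.inr A (Fin k → M) (Fin l → N) (∑ j, Pi.single j (y j)) := by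
              rw [Finset.univ_sum_single]
          _ = ∑ j, ejn j (y j) := by rw [map_sum]; rfl
      rw [hysum]
      exact Submodule.sum_mem _ fun j _ => (le_iSup p (Sum.inr j)) ⟨y j, rfl⟩
    have hxy : ((x, y) : (Fin k → M) × (Fin l → N)) = (x, 0) + (0, y) := by simp
    rw [hxy]
    exact Submodule.add_mem _ hx hy
  haveI hVss : IsSemisimpleModule A ((Fin k → M) × (Fin l → N)) :=
    isSemisimpleModule_of_isSemisimpleModule_submodule' hpss hptop
  -- every atom lies in the `M`-part or the `N`-part
  have hatom : ∀ T : Submodule A ((Fin k → M) × (Fin l → N)), IsAtom T →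
      T ≤ Submodule.prod ⊤ ⊥ ∨ T ≤ Submodule.prod ⊥ ⊤ := by
    intro T hT
    haveI : IsSimpleModule A T := isSimpleModule_iff_isAtom.mpr hT
    by_cases h2 : (LinearMap.snd A (Fin k → M) (Fin l → N)).comp T.subtype = 0
    · left
      intro v hv
      refine Submodule.mem_prod.mpr ⟨trivial, ?_⟩
      have := DFunLike.congr_fun h2 ⟨v, hv⟩
      simpa using this
    · by_cases h1 : (LinearMap.fst A (Fin k → M) (Fin l → N)).comp T.subtype = 0
      · right
        intro v hv
        refine Submodule.mem_prod.mpr ⟨?_, trivial⟩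
        have := DFunLike.congr_fun h1 ⟨v, hv⟩
        simpa using this
      · exfalso
        obtain ⟨x1, hx1⟩ := DFunLike.ne_iff.mp h1
        obtain ⟨i, hi⟩ := Function.ne_iff.mp (by simpa using hx1)
        obtain ⟨x2, hx2⟩ := DFunLike.ne_iff.mp h2
        obtain ⟨j, hj⟩ := Function.ne_iff.mp (by simpa using hx2)
        let g1 : T →ₗ[A] M := (LinearMap.proj i).comp
          ((LinearMap.fst A (Fin k → M) (Fin l → N)).comp T.subtype)
        let g2 : T →ₗ[A] N := (LinearMap.proj j).comp
          ((LinearMap.snd A (Fin k → M) (Fin l → N)).comp T.subtype)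
        have hg1 : g1 ≠ 0 := fun hg => hi (by simpa [g1] using DFunLike.congr_fun hg x1)
        have hg2 : g2 ≠ 0 := fun hg => hj (by simpa [g2] using DFunLike.congr_fun hg x2)
        have e1 := LinearEquiv.ofBijective g1 (LinearMap.bijective_of_ne_zero hg1)
        have e2 := LinearEquiv.ofBijective g2 (LinearMap.bijective_of_ne_zero hg2)
        exact hiso ⟨e1.symm.trans e2⟩
  -- decompose the cyclic module generated by `(s, t)`
  obtain ⟨c, hc, hcatoms⟩ :=
    eq_sSup_atoms (Submodule.span A {((s, t) : (Fin k → M) × (Fin l → N))})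
  have hSle : Submodule.span A {((s, t) : (Fin k → M) × (Fin l → N))} ≤
      (Submodule.span A {((s, t) : (Fin k → M) × (Fin l → N))} ⊓ Submodule.prod ⊤ ⊥) ⊔
      (Submodule.span A {((s, t) : (Fin k → M) × (Fin l → N))} ⊓ Submodule.prod ⊥ ⊤) := by
    conv_lhs => rw [hc]
    refine sSup_le fun a ha => ?_
    have haS : a ≤ Submodule.span A {((s, t) : (Fin k → M) × (Fin l → N))} :=
      hc ▸ le_sSup ha
    rcases hatom a (hcatoms a ha) with hP' | hQ'
    · exact le_trans (le_inf haS hP') le_sup_left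
    · exact le_trans (le_inf haS hQ') le_sup_right
  have hwS : ((s, t) : (Fin k → M) × (Fin l → N)) ∈
      Submodule.span A {((s, t) : (Fin k → M) × (Fin l → N))} :=
    Submodule.mem_span_singleton_self _
  obtain ⟨pv, hpv, qv, hqv, hpq⟩ := Submodule.mem_sup.mp (hSle hwS)
  obtain ⟨u, hu⟩ := Submodule.mem_span_singleton.mp (Submodule.mem_inf.mp hqv).1
  have hq1 : qv.1 = 0 := by
    have := (Submodule.mem_prod.mp (Submodule.mem_inf.mp hqv).2).1
    simpa using this
  have hp2 : pv.2 = 0 := by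
    have := (Submodule.mem_prod.mp (Submodule.mem_inf.mp hpv).2).2
    simpa using this
  have hq2 : qv.2 = t := by
    have h2 : pv.2 + qv.2 = t := congrArg Prod.snd hpq
    rwa [hp2, zero_add] at h2
  refine ⟨u, ?_, ?_⟩
  · refine hsM u fun i => ?_
    have h1 : u • s = (0 : Fin k → M) := by
      have := congrArg Prod.fst hu
      simpa [Prod.smul_fst, hq1] using this
    simpa using congrFun h1 i
  · refine htN (1 - u) fun j => ?_
    have h2 : u • t = t := by
      have := congrArg Prod.snd hu
      simpa [Prod.smul_snd, hq2] using this
    have h3 : u • t j = t j := by simpa using congrFun h2 j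
    rw [sub_smul, one_smul, h3, sub_self]

end Aux


/-- Let `(A, φ)` be a Frobenius algebra, `M`, `N` simple left `A`-modules,
and `γ`, `μ` functionals belonging to `M`, `N` respectively.  If `φ⁻¹(γ)·φ⁻¹(μ) ≠ 0`
in `A`, then `M ≅ N`. -/
theorem frobenius_orthogonality_product
    {A : Type*} [Ring A] [Algebra ℂ A] [FiniteDimensional ℂ A]
    (φ : A ≃ₗ[ℂ] Module.Dual ℂ A)
    (hφ : ∀ a b x : A, φ (a * b) x = φ b (x * a))
    (M : Type*) [AddCommGroup M] [Module A M] [IsSimpleModule A M]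
    (N : Type*) [AddCommGroup N] [Module A N] [IsSimpleModule A N]
    (γ μ : Module.Dual ℂ A)
    (hγ : ∀ a : A, (∀ m : M, a • m = 0) → γ a = 0)
    (hμ : ∀ a : A, (∀ n : N, a • n = 0) → μ a = 0)
    (h : φ.symm γ * φ.symm μ ≠ 0) :
    Nonempty (M ≃ₗ[A] N) := by
  by_contra hiso
  obtain ⟨u, huM, huN⟩ := exists_separating M N hiso
  set g := φ.symm γ with hg
  set d := φ.symm μ with hd
  -- u * g = 0
  have key1 : u * g = 0 := by
    apply φ.injective
    rw [map_zero]
    ext x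
    rw [hφ u g x, hg, LinearEquiv.apply_symm_apply]
    exact hγ (x * u) fun m => by rw [mul_smul, huM m, smul_zero]
  -- anything annihilating N multiplied by d is 0
  have key2 : ∀ a : A, (∀ n : N, a • n = 0) → a * d = 0 := by
    intro a ha
    apply φ.injective
    rw [map_zero]
    ext x
    rw [hφ a d x, hd, LinearEquiv.apply_symm_apply]
    exact hμ (x * a) fun n => by rw [mul_smul, ha n, smul_zero]
  have hvg : ((1 - u) * g) * d = 0 := by
    refine key2 _ fun n => ?_
    rw [mul_smul, huN (g • n)]
  apply h
  have hdecomp : g = u * g + (1 - u) * g := by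
    rw [← add_mul]
    have : u + (1 - u) = 1 := by abel
    rw [this, one_mul]
  calc g * d = (u * g + (1 - u) * g) * d := by rw [← hdecomp]
    _ = (u * g) * d + ((1 - u) * g) * d := by rw [add_mul]
    _ = 0 := by rw [key1, zero_mul, hvg, add_zero]
end

section
/- Let (A, φ) be a Frobenius algebra, M and N simple left A-modules with characters χ and ζ. If (aᵢ), (bᵢ) are φ-dual bases of A and Σᵢ χ(aᵢ)ζ(bᵢ) ≠ 0, then M ≅ N and χ = ζ. -/
open LinearMap TensorProduct

/-- The character of a module: `a ↦ trace of the action of `a` on `M`, as a linear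
functional on `A`. -/
noncomputable def charMap (A M : Type*) [Ring A] [Algebra ℂ A]
    [AddCommGroup M] [Module A M] [Module ℂ M]
    [SMulCommClass A ℂ M] [IsScalarTower ℂ A M] : Module.Dual ℂ A :=
  letI rep : A →ₗ[ℂ] (M →ₗ[ℂ] M) :=
    { toFun := fun a =>
        { toFun := fun m => a • m
          map_add' := smul_add a
          map_smul' := fun c m => smul_comm a c m }
      map_add' := fun a b => LinearMap.ext fun m => add_smul a b m
      map_smul' := fun c a => LinearMap.ext fun m => smul_assoc c a m }
  (LinearMap.trace ℂ M).comp rep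

/-- The action of `A` on `M` as a `ℂ`-linear map into endomorphisms. -/
noncomputable def actMap (A M : Type*) [Ring A] [Algebra ℂ A]
    [AddCommGroup M] [Module A M] [Module ℂ M]
    [SMulCommClass A ℂ M] [IsScalarTower ℂ A M] : A →ₗ[ℂ] (M →ₗ[ℂ] M) :=
  { toFun := fun a =>
      { toFun := fun m => a • m
        map_add' := smul_add a
        map_smul' := fun c m => smul_comm a c m }
    map_add' := fun a b => LinearMap.ext fun m => add_smul a b m
    map_smul' := fun c a => LinearMap.ext fun m => smul_assoc c a m }

lemma charMap_eq (A M : Type*) [Ring A] [Algebra ℂ A]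
    [AddCommGroup M] [Module A M] [Module ℂ M]
    [SMulCommClass A ℂ M] [IsScalarTower ℂ A M] (a : A) :
    charMap A M a = LinearMap.trace ℂ M (actMap A M a) := rfl

section ConjT

variable {M N : Type*} [AddCommGroup M] [Module ℂ M] [FiniteDimensional ℂ M]
  [AddCommGroup N] [Module ℂ N] [FiniteDimensional ℂ N]

/-- Conjugation operator on the Hom space. -/
noncomputable def conjT (f1 : M →ₗ[ℂ] M) (f2 : N →ₗ[ℂ] N) :
    (M →ₗ[ℂ] N) →ₗ[ℂ] (M →ₗ[ℂ] N) where
  toFun f := f2 ∘ₗ f ∘ₗ f1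
  map_add' := by intros; ext; simp
  map_smul' := by intros; ext; simp

lemma trace_conjT (f1 : M →ₗ[ℂ] M) (f2 : N →ₗ[ℂ] N) :
    trace ℂ (M →ₗ[ℂ] N) (conjT f1 f2) = trace ℂ M f1 * trace ℂ N f2 := by
  let e := dualTensorHomEquiv ℂ M N
  have key : conjT f1 f2 = e.conj (TensorProduct.map (Module.Dual.transpose (R := ℂ) f1) f2) := by
    have h2 : (conjT f1 f2) ∘ₗ e.toLinearMap =
        e.toLinearMap ∘ₗ TensorProduct.map (Module.Dual.transpose (R := ℂ) f1) f2 := by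
      apply TensorProduct.ext'
      intro g n
      ext m
      simp [e, conjT, dualTensorHomEquiv, Module.Dual.transpose]
    refine LinearMap.ext fun f => ?_
    obtain ⟨x, rfl⟩ := e.surjective f
    simpa [LinearEquiv.conj_apply] using LinearMap.congr_fun h2 x
  rw [key, trace_conj', trace_tensorProduct', trace_transpose']

end ConjT

/-- Let `(A, φ)` be a Frobenius algebra, `M`, `N` simple left `A`-modules
with characters `χ`, `ζ`.  If `(aᵢ)`, `(bᵢ)` are `φ`-dual bases and `∑ᵢ χ(aᵢ)ζ(bᵢ) ≠ 0`,
then `M ≅ N` and `χ = ζ`. -/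
theorem frobenius_character_orthogonality
    {A : Type*} [Ring A] [Algebra ℂ A] [FiniteDimensional ℂ A]
    (φ : A ≃ₗ[ℂ] Module.Dual ℂ A)
    (hφ : ∀ a b x : A, φ (a * b) x = φ b (x * a))
    {ι : Type*} [Fintype ι] [DecidableEq ι]
    (Ba Bb : Module.Basis ι ℂ A)
    (hdual : ∀ i j, φ (Bb i) (Ba j) = if i = j then 1 else 0)
    (M : Type*) [AddCommGroup M] [Module A M] [Module ℂ M]
    [SMulCommClass A ℂ M] [IsScalarTower ℂ A M] [FiniteDimensional ℂ M]
    [IsSimpleModule A M]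
    (N : Type*) [AddCommGroup N] [Module A N] [Module ℂ N]
    [SMulCommClass A ℂ N] [IsScalarTower ℂ A N] [FiniteDimensional ℂ N]
    [IsSimpleModule A N]
    (h : ∑ i, charMap A M (Ba i) * charMap A N (Bb i) ≠ 0) :
    Nonempty (M ≃ₗ[A] N) ∧ charMap A M = charMap A N := by
  -- coordinates with respect to the dual bases
  have hreprA : ∀ (y : A) (j : ι), Ba.repr y j = φ (Bb j) y := by
    intro y j
    conv_rhs => rw [← Ba.sum_repr y]
    simp [Finset.mul_sum, hdual, map_smul, smul_eq_mul, -Module.Basis.sum_repr]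
  have hreprB : ∀ (z : A) (i : ι), Bb.repr z i = φ z (Ba i) := by
    intro z i
    conv_rhs => rw [← Bb.sum_repr z]
    simp [map_sum, hdual, smul_eq_mul, -Module.Basis.sum_repr]
  -- the Casimir identity for bilinear expressions
  have casimir : ∀ {V : Type _} [AddCommGroup V] [Module ℂ V]
      (G : A →ₗ[ℂ] A →ₗ[ℂ] V) (x : A),
      ∑ i, G (Ba i * x) (Bb i) = ∑ j, G (Ba j) (x * Bb j) := by
    intro V _ _ G x
    have lhs : ∀ i, G (Ba i * x) (Bb i)
        = ∑ j, (φ (Bb j) (Ba i * x)) • G (Ba j) (Bb i) := by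
      intro i
      conv_lhs => rw [← Ba.sum_repr (Ba i * x)]
      rw [map_sum, LinearMap.sum_apply]
      refine Finset.sum_congr rfl fun j _ => ?_
      rw [map_smul, LinearMap.smul_apply, hreprA]
    have rhs : ∀ j, G (Ba j) (x * Bb j)
        = ∑ i, (φ (Bb j) (Ba i * x)) • G (Ba j) (Bb i) := by
      intro j
      conv_lhs => rw [← Bb.sum_repr (x * Bb j)]
      rw [map_sum]
      refine Finset.sum_congr rfl fun i _ => ?_
      rw [map_smul, hreprB, hφ]
    simp only [lhs, rhs]
    exact Finset.sum_comm
  -- the averaging operator on Hom_ℂ(M, N)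
  set T : (M →ₗ[ℂ] N) →ₗ[ℂ] (M →ₗ[ℂ] N) :=
    ∑ i, conjT (actMap A M (Ba i)) (actMap A N (Bb i)) with hT
  have htr : trace ℂ (M →ₗ[ℂ] N) T = ∑ i, charMap A M (Ba i) * charMap A N (Bb i) := by
    rw [hT, map_sum]
    exact Finset.sum_congr rfl fun i _ => by rw [trace_conjT, charMap_eq, charMap_eq]
  have hT0 : T ≠ 0 := by
    intro h0
    rw [h0, map_zero] at htr
    exact h htr.symm
  -- find f with T f ≠ 0
  have : ∃ f, T f ≠ 0 := by
    by_contra hc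
    push_neg at hc
    exact hT0 (LinearMap.ext fun f => by simpa using hc f)
  obtain ⟨f, hf⟩ := this
  set g : M →ₗ[ℂ] N := T f with hg
  have hgapp : ∀ m : M, g m = ∑ i, (Bb i) • f ((Ba i) • m) := by
    intro m
    rw [hg, hT]
    simp [conjT, actMap]
  -- g is A-linear
  have hA : ∀ (x : A) (m : M), g (x • m) = x • g m := by
    intro x m
    have hcas := casimir (LinearMap.mk₂ ℂ (fun p q => q • f (p • m))
        (fun p p' q => by rw [add_smul, map_add, smul_add])
        (fun c p q => by rw [smul_assoc, map_smul, smul_comm])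
        (fun p q q' => by rw [add_smul])
        (fun c p q => by rw [smul_assoc])) x
    simp only [LinearMap.mk₂_apply] at hcas
    rw [hgapp (x • m), hgapp m]
    calc ∑ i, Bb i • f (Ba i • x • m)
        = ∑ i, Bb i • f ((Ba i * x) • m) := by simp only [mul_smul]
      _ = ∑ j, (x * Bb j) • f (Ba j • m) := hcas
      _ = x • ∑ i, Bb i • f (Ba i • m) := by
          rw [Finset.smul_sum]
          exact Finset.sum_congr rfl fun i _ => (mul_smul x (Bb i) _)
  let gA : M →ₗ[A] N :=
    { toFun := g
      map_add' := g.map_add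
      map_smul' := hA }
  have hgA0 : gA ≠ 0 := by
    intro h0
    apply hf
    ext m
    have := LinearMap.congr_fun h0 m
    simpa [gA] using this
  have hbij := LinearMap.bijective_of_ne_zero hgA0
  let e : M ≃ₗ[A] N := LinearEquiv.ofBijective gA hbij
  refine ⟨⟨e⟩, ?_⟩
  -- characters agree
  let eC : M ≃ₗ[ℂ] N := e.restrictScalars ℂ
  ext a
  rw [charMap_eq, charMap_eq]
  have hconj : actMap A N a = eC.conj (actMap A M a) := by
    ext n
    simp only [LinearEquiv.conj_apply, LinearMap.comp_apply]
    show a • n = eC (a • (eC.symm n))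
    have h1 : eC (a • eC.symm n) = a • eC (eC.symm n) := e.map_smul a (eC.symm n)
    rw [h1, eC.apply_symm_apply]
  rw [hconj, trace_conj']
end

section
/- Let A be a Frobenius ⋆-algebra. Then the irreducible characters {χ_M : M ∈ Sim(A)} form an orthogonal basis of the space of class functionals on A with respect to the induced form; explicitly, with α_M = φ⁻¹(χ_M), one has ⟨α_M, α_N⟩ = 0 for M ≇ N and ⟨α_M, α_M⟩ = |c_M|²⟨e_M, e_M⟩ where α_M = c_M e_M. -/
/-- In a Frobenius ⋆-algebra `A`, the irreducible characters
(taken over a complete set `M i` of pairwise non-isomorphic simple modules) form an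
orthogonal basis of the space of class functionals; explicitly, with
`α i = φ⁻¹(χ_{M i})` one has `⟨α i, α j⟩ = 0` for `i ≠ j` and
`⟨α i, α i⟩ = |c|²·⟨e i, e i⟩` where `α i = c • e i` for the primitive central
idempotent `e i` corresponding to `M i`. -/
theorem frobenius_star_character_orthogonal_basis
    {A : Type*} [Ring A] [Algebra ℂ A] [FiniteDimensional ℂ A]
    (l : A →ₗ[ℂ] ℂ) (st : A → A)
    (hadd : ∀ a b : A, st (a + b) = st a + st b)
    (hinv : ∀ a : A, st (st a) = a)
    (hmul : ∀ a b : A, st (a * b) = st b * st a)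
    (hsmul : ∀ (c : ℂ) (a : A), st (c • a) = (starRingEnd ℂ c) • st a)
    (hclass : ∀ a b : A, l (a * b) = l (b * a))
    (hherm : ∀ a b : A, l (b * st a) = starRingEnd ℂ (l (a * st b)))
    (hpos : ∀ a : A, a ≠ 0 → 0 < (l (a * st a)).re)
    {ι : Type} [Fintype ι]
    (M : ι → Type) [∀ i, AddCommGroup (M i)] [∀ i, Module A (M i)]
    [∀ i, Module ℂ (M i)] [∀ i, SMulCommClass A ℂ (M i)]
    [∀ i, IsScalarTower ℂ A (M i)] [∀ i, FiniteDimensional ℂ (M i)]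
    [∀ i, IsSimpleModule A (M i)]
    (hpairwise : ∀ i j, i ≠ j → ¬ Nonempty (M i ≃ₗ[A] M j))
    (hcomplete : ∀ (N : Type) [AddCommGroup N] [Module A N],
      IsSimpleModule A N → ∃ i, Nonempty (M i ≃ₗ[A] N))
    (α e : ι → A)
    (hα : ∀ i, ∀ x : A, l (x * α i) = charMap A (M i) x)
    (he_idem : ∀ i, e i * e i = e i)
    (he_central : ∀ i, ∀ a : A, e i * a = a * e i)
    (he_id : ∀ i, ∀ m : M i, e i • m = m)
    (he_ann : ∀ i, ∀ a : A, (∀ m : M i, a • m = 0) → a * e i = 0) :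
    (∀ i j, i ≠ j → l (α i * st (α j)) = 0) ∧
    (∀ i, ∀ c : ℂ, α i = c • e i →
      l (α i * st (α i)) = (‖c‖ : ℂ) ^ 2 * l (e i * st (e i))) ∧
    LinearIndependent ℂ (fun i => charMap A (M i)) ∧
    (Submodule.span ℂ (Set.range fun i => charMap A (M i)) : Set (Module.Dual ℂ A)) =
      {γ : Module.Dual ℂ A | ∀ a b : A, γ (a * b) = γ (b * a)} := by
  classical
  -- the representation maps
  let ρ : ∀ i : ι, A → (M i →ₗ[ℂ] M i) := fun i x =>
    { toFun := fun m => x • m, map_add' := smul_add x,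
      map_smul' := fun c m => smul_comm x c m }
  have hρ : ∀ i (x : A) (m : M i), ρ i x m = x • m := fun _ _ _ => rfl
  have hchar : ∀ i (x : A), charMap A (M i) x = LinearMap.trace ℂ (M i) (ρ i x) :=
    fun i x => rfl
  -- nondegeneracy of l
  have hnd : ∀ z : A, (∀ x : A, l (x * z) = 0) → z = 0 := by
    intro z hz
    by_contra h0
    have h1 : l (z * st z) = 0 := by rw [hclass]; exact hz (st z)
    have h2 := hpos z h0
    rw [h1] at h2
    simp at h2
  -- e i is nonzero
  have hene : ∀ i, e i ≠ 0 := by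
    intro i h
    have := IsSimpleModule.nontrivial A (M i)
    obtain ⟨m, hm⟩ := exists_ne (0 : M i)
    apply hm
    rw [← he_id i m, h, zero_smul]
  -- a central idempotent acts as 0 or 1 on each simple module
  have hL2 : ∀ f : A, (∀ a, f * a = a * f) → f * f = f → ∀ i,
      (∀ m : M i, f • m = 0) ∨ (∀ m : M i, f • m = m) := by
    intro f hc hidem i
    let θ : M i →ₗ[A] M i :=
      { toFun := fun m => f • m, map_add' := smul_add f,
        map_smul' := fun a m => by
          simp only [RingHom.id_apply]
          rw [← mul_smul, hc a, mul_smul] }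
    rcases θ.bijective_or_eq_zero with hbij | h0
    · right
      intro m
      have h2 : θ (θ m) = θ m := by
        show f • f • m = f • m
        rw [← mul_smul, hidem]
      exact hbij.injective h2
    · left
      intro m
      have := LinearMap.congr_fun h0 m
      exact this
  -- e i kills M j for i ≠ j
  have hL3 : ∀ i j, i ≠ j → ∀ m : M j, e i • m = 0 := by
    intro i j hij
    rcases hL2 (e i) (he_central i) (he_idem i) j with h0 | h1
    · exact h0
    exfalso
    have hij1 : e i * e j = e j := by
      have h := he_ann j (e i - e j) (fun m => by rw [sub_smul, h1 m, he_id j m, sub_self])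
      rwa [sub_mul, he_idem j, sub_eq_zero] at h
    rcases hL2 (e j) (he_central j) (he_idem j) i with k0 | k1
    · have h2 : e j * e i = 0 := he_ann i (e j) k0
      exact hene j (by rw [← hij1, he_central i, h2])
    · have hji1 : e j * e i = e i := by
        have h := he_ann i (e j - e i) (fun m => by rw [sub_smul, k1 m, he_id i m, sub_self])
        rwa [sub_mul, he_idem i, sub_eq_zero] at h
      have hee : e i = e j := by rw [← hji1, he_central j, hij1]
      -- find a minimal left ideal inside A * e i and map it to both M i and M j
      haveI : IsArtinian A A := isArtinian_of_tower ℂ inferInstance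
      obtain ⟨L, hLatom, hLle⟩ :
          ∃ L : Submodule A A, IsAtom L ∧ L ≤ Submodule.span A {e i} := by
        rcases eq_bot_or_exists_atom_le (Submodule.span A {e i}) with hbot | h
        · exfalso
          have hmem : e i ∈ Submodule.span A {e i} := Submodule.mem_span_singleton_self _
          rw [hbot, Submodule.mem_bot] at hmem
          exact hene i hmem
        · exact h
      haveI : IsSimpleModule A L := isSimpleModule_iff_isAtom.mpr hLatom
      have hmul_e : ∀ x ∈ L, x * e i = x := by
        intro x hx
        obtain ⟨a, ha⟩ := Submodule.mem_span_singleton.mp (hLle hx)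
        rw [← ha, smul_eq_mul, mul_assoc, he_idem i]
      have key : ∀ k : ι, e k = e i → Nonempty ((↥L) ≃ₗ[A] M k) := by
        intro k hk
        have hnall : ¬ ∀ x ∈ L, ∀ m : M k, x • m = 0 := by
          intro hall
          apply hLatom.1
          rw [Submodule.eq_bot_iff]
          intro x hx
          have hxe := he_ann k x (hall x hx)
          rw [hk] at hxe
          rw [← hmul_e x hx, hxe]
        push_neg at hnall
        obtain ⟨x₀, hx₀L, m₀, hm₀⟩ := hnall
        let ψ : (↥L) →ₗ[A] M k :=
          { toFun := fun x => (x : A) • m₀, map_add' := fun x y => by simp [add_smul],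
            map_smul' := fun a x => by
              simp only [RingHom.id_apply, Submodule.coe_smul, smul_eq_mul, mul_smul] }
        rcases ψ.bijective_or_eq_zero with hb | hzero
        · exact ⟨LinearEquiv.ofBijective ψ hb⟩
        · exfalso
          apply hm₀
          have : ψ ⟨x₀, hx₀L⟩ = 0 := by rw [hzero]; rfl
          exact this
      obtain ⟨eqi⟩ := key i rfl
      obtain ⟨eqj⟩ := key j hee.symm
      exact hpairwise i j hij ⟨eqi.symm.trans eqj⟩
  -- orthogonality of the idempotents
  have heorth : ∀ i j, i ≠ j → e i * e j = 0 := fun i j hij => he_ann j (e i) (hL3 i j hij)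
  -- star fixes the idempotents
  have hste : ∀ i, st (e i) = e i := by
    intro i
    have hcentral : ∀ a, st (e i) * a = a * st (e i) := by
      intro a
      have h1 : st (e i) * a = st (st a * e i) := by rw [hmul, hinv]
      have h2 : st a * e i = e i * st a := (he_central i (st a)).symm
      rw [h1, h2, hmul, hinv]
    have hidem : st (e i) * st (e i) = st (e i) := by rw [← hmul, he_idem i]
    rcases hL2 (st (e i)) hcentral hidem i with h0 | h1
    · exfalso
      have h2 : st (e i) * e i = 0 := he_ann i _ h0
      have h3 : l (e i * st (e i)) = 0 := by rw [hclass, h2, map_zero]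
      have h4 := hpos (e i) (hene i)
      rw [h3] at h4
      simp at h4
    · have h2 : st (e i) * e i = e i := by
        have h := he_ann i (st (e i) - e i)
          (fun m => by rw [sub_smul, h1 m, he_id i m, sub_self])
        rwa [sub_mul, he_idem i, sub_eq_zero] at h
      have h3 := congrArg st h2
      rw [hmul, hinv] at h3
      rw [h2] at h3
      exact h3.symm
  -- the sum of the idempotents is 1
  have hsum : ∑ k, e k = 1 := by
    by_contra hne
    set u : A := 1 - ∑ k, e k with hu
    have hu0 : u ≠ 0 := fun h => hne (by rwa [hu, sub_eq_zero, eq_comm] at h)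
    have hue : ∀ k, u * e k = 0 := by
      intro k
      rw [hu, sub_mul, one_mul, Finset.sum_mul]
      have hs : ∑ x, e x * e k = e k := by
        rw [Finset.sum_eq_single k (fun x _ hx => heorth x k hx) (by simp)]
        exact he_idem k
      rw [hs, sub_self]
    have hueL : ∀ k, e k * u = 0 := by
      intro k
      rw [hu, mul_sub, mul_one, Finset.mul_sum]
      have hs : ∑ x, e k * e x = e k := by
        rw [Finset.sum_eq_single k (fun x _ hx => heorth k x (Ne.symm hx)) (by simp)]
        exact he_idem k
      rw [hs, sub_self]
    have huM : ∀ k, ∀ m : M k, u • m = 0 := by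
      intro k m
      conv_lhs => rw [← he_id k m, ← mul_smul, hue k]
      exact zero_smul A m
    have hI : Submodule.span A {(1 : A) - u} ≠ ⊤ := by
      intro htop
      have h1 : (1 : A) ∈ Submodule.span A {(1 : A) - u} := htop ▸ Submodule.mem_top
      obtain ⟨a, ha⟩ := Submodule.mem_span_singleton.mp h1
      have h2 : ((1 : A) - u) * u = 0 := by
        have : (1 : A) - u = ∑ k, e k := by rw [hu, sub_sub_cancel]
        rw [this, Finset.sum_mul]
        exact Finset.sum_eq_zero fun k _ => hueL k
      have h3 : u = 0 := by
        calc u = 1 * u := (one_mul u).symm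
        _ = (a • ((1 : A) - u)) * u := by rw [ha]
        _ = a • (((1 : A) - u) * u) := smul_mul_assoc a _ u
        _ = 0 := by rw [h2, smul_zero]
      exact hu0 h3
    obtain ⟨J, hJco, hJle⟩ :=
      (eq_top_or_exists_le_coatom (Submodule.span A {(1 : A) - u})).resolve_left hI
    haveI : IsSimpleModule A (A ⧸ J) := isSimpleModule_iff_isCoatom.mpr hJco
    haveI : Small.{0} A := small_of_injective (Module.finBasis ℂ A).equivFun.injective
    haveI : Small.{0} (A ⧸ J) := small_of_surjective (Submodule.mkQ_surjective J)
    haveI : IsSimpleModule A (Shrink (A ⧸ J)) :=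
      IsSimpleModule.congr (Shrink.linearEquiv A (A ⧸ J))
    obtain ⟨k, ⟨φk⟩⟩ := hcomplete (Shrink (A ⧸ J)) inferInstance
    let eq2 : M k ≃ₗ[A] A ⧸ J := φk.trans (Shrink.linearEquiv A (A ⧸ J))
    have hu_q : ∀ x : A ⧸ J, u • x = 0 := by
      intro x
      have h1 := huM k (eq2.symm x)
      have h2 := congrArg eq2 h1
      rw [map_smul, LinearEquiv.apply_symm_apply, map_zero] at h2
      exact h2
    have humem : u ∈ J := by
      have h1 := hu_q (Submodule.Quotient.mk 1)
      rw [← Submodule.Quotient.mk_smul, smul_eq_mul, mul_one,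
        Submodule.Quotient.mk_eq_zero] at h1
      exact h1
    have h1u : (1 : A) - u ∈ J := hJle (Submodule.mem_span_singleton_self _)
    have hone : (1 : A) ∈ J := by
      have := J.add_mem humem h1u
      simpa using this
    apply hJco.1
    rw [Submodule.eq_top_iff']
    intro x
    have := J.smul_mem x hone
    simpa using this
  -- the trace of e k on M i
  have hχe : ∀ i, charMap A (M i) (e i) = (Module.finrank ℂ (M i) : ℂ) := by
    intro i
    rw [hchar]
    have h1 : ρ i (e i) = LinearMap.id := LinearMap.ext fun m => he_id i m
    rw [h1]
    exact LinearMap.trace_id ℂ (M i)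
  have hχe0 : ∀ i k, i ≠ k → charMap A (M i) (e k) = 0 := by
    intro i k hik
    rw [hchar]
    have h1 : ρ i (e k) = 0 := LinearMap.ext fun m => hL3 k i (Ne.symm hik) m
    rw [h1, map_zero]
  -- finrank is nonzero
  have hfr : ∀ i, (Module.finrank ℂ (M i) : ℂ) ≠ 0 := by
    intro i
    haveI := IsSimpleModule.nontrivial A (M i)
    exact_mod_cast Nat.cast_ne_zero.mpr (Module.finrank_pos (R := ℂ) (M := M i)).ne'
  -- characters are class functionals
  have hχclass : ∀ i (a b : A), charMap A (M i) (a * b) = charMap A (M i) (b * a) := by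
    intro i a b
    have hmulmap : ∀ x y : A, ρ i (x * y) = ρ i x * ρ i y :=
      fun x y => LinearMap.ext fun m => mul_smul x y m
    rw [hchar, hchar, hmulmap a b, hmulmap b a, LinearMap.trace_mul_comm]
  -- scalar action of central elements on simple modules
  have hscalar : ∀ z : A, (∀ a, z * a = a * z) → ∀ i, ∃ c : ℂ, ∀ m : M i, z • m = c • m := by
    intro z hz i
    haveI := IsSimpleModule.nontrivial A (M i)
    let f : Module.End ℂ (M i) :=
      { toFun := fun m => z • m, map_add' := smul_add z,
        map_smul' := fun c m => smul_comm z c m }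
    obtain ⟨c, hc⟩ := Module.End.exists_eigenvalue f
    obtain ⟨m₀, hm₀⟩ := hc.exists_hasEigenvector
    let K : Submodule A (M i) :=
      { carrier := {m | z • m = c • m},
        add_mem' := fun {x y} hx hy => by
          simp only [Set.mem_setOf_eq] at *
          rw [smul_add, smul_add, hx, hy],
        zero_mem' := by simp,
        smul_mem' := fun a m hm => by
          simp only [Set.mem_setOf_eq] at *
          rw [← mul_smul, hz a, mul_smul, hm, smul_comm] }
    have hKne : K ≠ ⊥ := by
      intro hbot
      have : m₀ ∈ K := hm₀.apply_eq_smul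
      rw [hbot, Submodule.mem_bot] at this
      exact hm₀.2 this
    have hKtop : K = ⊤ := (eq_bot_or_eq_top K).resolve_left hKne
    exact ⟨c, fun m => by
      have : m ∈ K := hKtop ▸ Submodule.mem_top
      exact this⟩
  -- the α i are central
  have hcentral_of_class : ∀ z : A, (∀ x : A, ∃ γv : ℂ, l (x * z) = γv) → True := fun _ _ => trivial
  have hαcgen : ∀ z : A, (∀ a b : A, l ((a * b) * z) = l ((b * a) * z)) →
      ∀ a, a * z = z * a := by
    intro z hcls a
    have h : ∀ x, l (x * (a * z - z * a)) = 0 := by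
      intro x
      have h1 : l (x * (a * z)) = l ((x * a) * z) := by rw [mul_assoc]
      have h2 : l (x * (z * a)) = l ((a * x) * z) := by
        rw [← mul_assoc, hclass, ← mul_assoc]
      rw [mul_sub, map_sub, h1, h2, hcls x a, sub_self]
    have := hnd _ h
    rw [sub_eq_zero] at this
    exact this
  have hαc : ∀ i, ∀ a, a * α i = α i * a := by
    intro i
    apply hαcgen
    intro a b
    rw [hα, hα, hχclass]
  -- α i * e j = 0 for i ≠ j
  have hαe0 : ∀ i j, i ≠ j → α i * e j = 0 := by
    intro i j hij
    apply hnd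
    intro x
    have h1 : l (x * (α i * e j)) = l ((e j * x) * α i) := by
      rw [← mul_assoc, hclass, mul_assoc]
    rw [h1, hα]
    rw [hchar]
    have h2 : ρ i (e j * x) = 0 := by
      apply LinearMap.ext
      intro m
      show (e j * x) • m = 0
      rw [mul_smul]
      exact hL3 j i (Ne.symm hij) (x • m)
    rw [h2, map_zero]
  -- α i is a nonzero multiple of e i
  have hαe : ∀ i, ∃ c : ℂ, c ≠ 0 ∧ α i = c • e i := by
    intro i
    obtain ⟨c, hc⟩ := hscalar (α i) (fun a => (hαc i a).symm) i
    have h1 : α i * e i = c • e i := by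
      have h := he_ann i (α i * e i - c • e i) (fun m => by
        rw [sub_smul, mul_smul, he_id i m, hc m]
        have : (c • e i) • m = c • (e i • m) := smul_assoc c (e i) m
        rw [this, he_id i m, sub_self])
      rw [sub_mul, mul_assoc, he_idem i, smul_mul_assoc, he_idem i, sub_eq_zero] at h
      exact h
    have h2 : α i = c • e i := by
      calc α i = α i * 1 := (mul_one _).symm
      _ = α i * ∑ k, e k := by rw [hsum]
      _ = ∑ k, α i * e k := Finset.mul_sum _ _ _
      _ = α i * e i := Finset.sum_eq_single i (fun k _ hk => hαe0 i k (Ne.symm hk)) (by simp)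
      _ = c • e i := h1
    refine ⟨c, ?_, h2⟩
    intro hc0
    have hα0 : α i = 0 := by rw [h2, hc0, zero_smul]
    have h3 := hα i 1
    rw [hα0, mul_zero, map_zero, hchar] at h3
    have h4 : ρ i (1 : A) = LinearMap.id := LinearMap.ext fun m => one_smul A m
    rw [h4, LinearMap.trace_id] at h3
    exact hfr i h3.symm
  -- main computations
  have habs : ∀ c : ℂ, (‖c‖ : ℂ) ^ 2 = c * starRingEnd ℂ c := by
    intro c
    rw [← Complex.ofReal_pow, Complex.sq_norm, Complex.mul_conj]
  refine ⟨?_, ?_, ?_, ?_⟩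
  · -- orthogonality
    intro i j hij
    obtain ⟨ci, _, hci⟩ := hαe i
    obtain ⟨cj, _, hcj⟩ := hαe j
    rw [hci, hcj, hsmul, hste j, smul_mul_assoc, mul_smul_comm, heorth i j hij,
      smul_zero, smul_zero, map_zero]
  · -- norm
    intro i c hc
    rw [hc, hsmul, smul_mul_assoc, mul_smul_comm, map_smul, map_smul, smul_eq_mul,
      smul_eq_mul, habs c]
    ring
  · -- linear independence
    rw [Fintype.linearIndependent_iff]
    intro g hg k
    have h1 := congrArg (fun φ : Module.Dual ℂ A => φ (e k)) hg
    simp only [LinearMap.zero_apply] at h1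
    rw [LinearMap.coe_sum, Finset.sum_apply] at h1
    simp only [LinearMap.smul_apply, smul_eq_mul] at h1
    have h2 : ∀ i, g i * charMap A (M i) (e k) =
        if i = k then g k * (Module.finrank ℂ (M k) : ℂ) else 0 := by
      intro i
      by_cases hik : i = k
      · subst hik; rw [if_pos rfl, hχe]
      · rw [if_neg hik, hχe0 i k hik, mul_zero]
    rw [Finset.sum_congr rfl (fun i _ => h2 i), Finset.sum_ite_eq' Finset.univ k
      (fun _ => g k * (Module.finrank ℂ (M k) : ℂ)), if_pos (Finset.mem_univ k)] at h1
    exact (mul_eq_zero.mp h1).resolve_right (hfr k)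
  · -- span equals class functionals
    -- the map Φ : A → Dual
    let Φ : A →ₗ[ℂ] Module.Dual ℂ A :=
      { toFun := fun a => l ∘ₗ LinearMap.mulRight ℂ a,
        map_add' := fun a b => by
          ext x
          simp [LinearMap.mulRight_apply, mul_add],
        map_smul' := fun c a => by
          ext x
          simp [LinearMap.mulRight_apply, mul_smul_comm] }
    have hΦ : ∀ a x, Φ a x = l (x * a) := fun a x => rfl
    have hΦinj : Function.Injective Φ := by
      rw [injective_iff_map_eq_zero]
      intro a ha
      apply hnd
      intro x
      have := congrArg (fun φ : Module.Dual ℂ A => φ x) ha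
      simpa [hΦ] using this
    have hΦsurj : Function.Surjective Φ :=
      (LinearMap.injective_iff_surjective_of_finrank_eq_finrank
        (Subspace.dual_finrank_eq (V := A)).symm).mp hΦinj
    apply Set.Subset.antisymm
    · intro γ hγ
      have : ∀ a b : A, γ (a * b) = γ (b * a) := by
        refine Submodule.span_induction ?_ ?_ ?_ ?_ hγ
        · rintro φ ⟨i, rfl⟩ a b
          exact hχclass i a b
        · intro a b; simp
        · intro φ ψ _ _ hφ hψ a b
          simp [hφ a b, hψ a b]
        · intro c φ _ hφ a b
          simp [hφ a b]
      exact this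
    · intro γ hγ
      simp only [Set.mem_setOf_eq] at hγ
      obtain ⟨z, hz⟩ := hΦsurj γ
      have hzc : ∀ a, a * z = z * a := by
        apply hαcgen
        intro a b
        have h1 : l ((a * b) * z) = γ (a * b) := by rw [← hz]; rfl
        have h2 : l ((b * a) * z) = γ (b * a) := by rw [← hz]; rfl
        rw [h1, h2, hγ a b]
      have hze : ∀ k, ∃ c : ℂ, z * e k = c • e k := by
        intro k
        obtain ⟨c, hc⟩ := hscalar z (fun a => (hzc a).symm) k
        refine ⟨c, ?_⟩
        have h := he_ann k (z * e k - c • e k) (fun m => by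
          rw [sub_smul, mul_smul, he_id k m, hc m]
          have : (c • e k) • m = c • (e k • m) := smul_assoc c (e k) m
          rw [this, he_id k m, sub_self])
        rw [sub_mul, mul_assoc, he_idem k, smul_mul_assoc, he_idem k, sub_eq_zero] at h
        exact h
      choose cz hcz using hze
      choose cα hcα0 hcα using hαe
      have hzsum : z = ∑ k, (cz k / cα k) • α k := by
        have h1 : z = ∑ k, z * e k := by
          calc z = z * 1 := (mul_one _).symm
          _ = z * ∑ k, e k := by rw [hsum]
          _ = ∑ k, z * e k := Finset.mul_sum _ _ _
        rw [h1]
        apply Finset.sum_congr rfl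
        intro k _
        rw [hcz k, hcα k, smul_smul, div_mul_cancel₀]
        exact hcα0 k
      have hγeq : γ = ∑ k, (cz k / cα k) • charMap A (M k) := by
        have hΦα : ∀ k, Φ (α k) = charMap A (M k) := by
          intro k
          ext x
          rw [hΦ, hα]
        rw [← hz, hzsum, map_sum]
        apply Finset.sum_congr rfl
        intro k _
        rw [map_smul, hΦα k]
      rw [SetLike.mem_coe]
      show γ ∈ Submodule.span ℂ (Set.range fun i => charMap A (M i))
      rw [hγeq]
      apply Submodule.sum_mem
      intro k _
      exact Submodule.smul_mem _ _ (Submodule.subset_span ⟨k, rfl⟩)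
end

section
/- Let A = ⊕_{r ∈ ℤ/mℤ} A_r be a ℤ/mℤ-graded Frobenius ⋆-algebra. If M = ⊕_r M_r ⊆ A is a ℤ/mℤ-graded left A-submodule of A with M_0 = 0, then M = 0. In other words, the null socle of the graded left A-module A is zero. -/
/-- Let `A = ⊕_{r ∈ ℤ/mℤ} A_r` be a `ℤ/mℤ`-graded Frobenius ⋆-algebra.
Any graded left `A`-submodule `I ⊆ A` (a homogeneous left ideal) with `I ∩ A₀ = 0`
is zero: the null socle of the graded left `A`-module `A` vanishes. -/
theorem graded_frobenius_star_null_socle_of_A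
    {A : Type*} [Ring A] [Algebra ℂ A] [FiniteDimensional ℂ A]
    {m : ℕ} [NeZero m]
    (𝒜 : ZMod m → Submodule ℂ A) [GradedRing 𝒜]
    (st : A → A)
    (hadd : ∀ a b : A, st (a + b) = st a + st b)
    (hinv : ∀ a : A, st (st a) = a)
    (hmul : ∀ a b : A, st (a * b) = st b * st a)
    (hsmul : ∀ (c : ℂ) (a : A), st (c • a) = (starRingEnd ℂ c) • st a)
    (hstgr : ∀ r : ZMod m, ∀ a ∈ 𝒜 r, st a ∈ 𝒜 (-r))
    (l : A →ₗ[ℂ] ℂ)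
    (hl0 : ∀ r : ZMod m, r ≠ 0 → ∀ a ∈ 𝒜 r, l a = 0)
    (hclass0 : ∀ a ∈ 𝒜 0, ∀ b ∈ 𝒜 0, l (a * b) = l (b * a))
    (hherm : ∀ a b : A, l (b * st a) = starRingEnd ℂ (l (a * st b)))
    (hpos : ∀ a : A, a ≠ 0 → 0 < (l (a * st a)).re)
    (I : Ideal A)
    (hgraded : ∀ x ∈ I, ∀ r : ZMod m, (DirectSum.decompose 𝒜 x r : A) ∈ I)
    (h0 : ∀ x ∈ I, x ∈ 𝒜 0 → x = 0) :
    I = ⊥ := by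
  -- st 0 = 0
  have hst0 : st 0 = 0 := by
    have := hadd 0 0
    simpa using this
  -- key: homogeneous elements of I are zero
  have key : ∀ r : ZMod m, ∀ a ∈ I, a ∈ 𝒜 r → a = 0 := by
    intro r a haI har
    have hmem : st a * a ∈ I := Ideal.mul_mem_left I (st a) haI
    have hgr : st a * a ∈ 𝒜 0 := by
      have := SetLike.mul_mem_graded (hstgr r a har) har
      simpa using this
    have hz : st a * a = 0 := h0 _ hmem hgr
    by_contra hne
    have hstne : st a ≠ 0 := by
      intro h
      apply hne
      rw [← hinv a, h, hst0]
    have := hpos (st a) hstne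
    rw [hinv, hz] at this
    simp at this
  rw [eq_bot_iff]
  intro x hx
  have hcomp : ∀ r : ZMod m, (DirectSum.decompose 𝒜 x r : A) = 0 := fun r =>
    key r _ (hgraded x hx r) (SetLike.coe_mem _)
  classical
  have : x = 0 := by
    rw [← DirectSum.sum_support_decompose 𝒜 x]
    exact Finset.sum_eq_zero fun r _ => hcomp r
  simpa using this
end

section
/- Let A = ⊕_{r ∈ ℤ/mℤ} A_r be a ℤ/mℤ-graded Frobenius ⋆-algebra and M any left A₀-module. Then the null socle of the ℤ/mℤ-graded A-module A ⊗_{A₀} M is zero; i.e., every graded A-submodule U of A ⊗_{A₀} M with U₀ = 0 is the zero submodule. -/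
open scoped TensorProduct

/-- The relation submodule defining `A ⊗_{A₀} M` as a quotient of `A ⊗[ℂ] M`:
the `A`-span of the elements `(a·b) ⊗ m − a ⊗ (b•m)` for `b ∈ A₀`. -/
noncomputable def relSub {A : Type*} [Ring A] [Algebra ℂ A]
    {m : ℕ} (𝒜 : ZMod m → Submodule ℂ A) [GradedRing 𝒜]
    (M : Type*) [AddCommGroup M] [Module ℂ M] [Module (𝒜 0) M] :
    Submodule A (A ⊗[ℂ] M) :=
  Submodule.span A
    {x | ∃ (a : A) (b : 𝒜 0) (mm : M), x = (a * (b : A)) ⊗ₜ[ℂ] mm - a ⊗ₜ[ℂ] (b • mm)}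

/-- The induced module `A ⊗_{A₀} M`, realised as `(A ⊗[ℂ] M) / relSub`. -/
noncomputable abbrev IndMod {A : Type*} [Ring A] [Algebra ℂ A]
    {m : ℕ} (𝒜 : ZMod m → Submodule ℂ A) [GradedRing 𝒜]
    (M : Type*) [AddCommGroup M] [Module ℂ M] [Module (𝒜 0) M] :=
  (A ⊗[ℂ] M) ⧸ relSub 𝒜 M

/-- The `r`-th graded piece of `A ⊗_{A₀} M`: the `ℂ`-span of the classes of the
pure tensors `a ⊗ m` with `a ∈ A_r`. -/
noncomputable def gradePiece {A : Type*} [Ring A] [Algebra ℂ A]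
    {m : ℕ} (𝒜 : ZMod m → Submodule ℂ A) [GradedRing 𝒜]
    (M : Type*) [AddCommGroup M] [Module ℂ M] [Module (𝒜 0) M]
    (r : ZMod m) : Submodule ℂ (IndMod 𝒜 M) :=
  Submodule.span ℂ
    {x | ∃ a ∈ 𝒜 r, ∃ mm : M, x = (relSub 𝒜 M).mkQ ((a : A) ⊗ₜ[ℂ] mm)}

open scoped InnerProductSpace



lemma star_closed_algebra_has_unit {V : Type*} [NormedAddCommGroup V]
    [InnerProductSpace ℂ V] [FiniteDimensional ℂ V]
    (E : Submodule ℂ (V →ₗ[ℂ] V))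
    (hmulE : ∀ T ∈ E, ∀ S ∈ E, T * S ∈ E)
    (hadjE : ∀ T ∈ E, LinearMap.adjoint T ∈ E)
    (hnd : ∀ v : V, v ≠ 0 → ∃ T ∈ E, T v ≠ 0) :
    ∃ e ∈ E, ∀ v, e v = v := by
  by_cases hV : ∀ v : V, v = 0
  · exact ⟨0, zero_mem _, fun v => by rw [hV v]; simp⟩
  push_neg at hV
  obtain ⟨v₀, hv₀⟩ := hV
  haveI : Nontrivial V := ⟨⟨v₀, 0, hv₀⟩⟩
  classical
  let bE : Module.Basis (Fin (Module.finrank ℂ ↥E)) ℂ ↥E := Module.finBasis ℂ ↥E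
  set z : Fin (Module.finrank ℂ ↥E) → (V →ₗ[ℂ] V) := fun k => (bE k : V →ₗ[ℂ] V) with hzdef
  have hz : ∀ k, z k ∈ E := fun k => (bE k).2
  set T : V →ₗ[ℂ] V := ∑ k, z k * LinearMap.adjoint (z k) with hTdef
  have hTE : T ∈ E :=
    Submodule.sum_mem _ fun k _ => hmulE _ (hz k) _ (hadjE _ (hz k))
  -- T has trivial kernel
  have hker : ∀ v : V, T v = 0 → v = 0 := by
    intro v hv
    by_contra hvne
    have hinner : ⟪v, T v⟫_ℂ = ∑ k, (‖LinearMap.adjoint (z k) v‖ : ℂ) ^ 2 := by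
      rw [hTdef, LinearMap.sum_apply, inner_sum]
      refine Finset.sum_congr rfl fun k _ => ?_
      rw [Module.End.mul_apply, ← LinearMap.adjoint_inner_left,
        inner_self_eq_norm_sq_to_K]
      norm_cast
    rw [hv, inner_zero_right] at hinner
    have hre : ∑ k, (‖LinearMap.adjoint (z k) v‖ : ℝ) ^ 2 = 0 := by
      have := congrArg Complex.re hinner.symm
      simpa [← Complex.ofReal_pow] using this
    have h1 : ∀ k, LinearMap.adjoint (z k) v = 0 := by
      intro k
      have hk := (Finset.sum_eq_zero_iff_of_nonneg
        (fun k _ => sq_nonneg (‖LinearMap.adjoint (z k) v‖))).1 hre k (Finset.mem_univ k)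
      have := pow_eq_zero_iff (n := 2) (by norm_num) |>.1 hk
      simpa using this
    have h2 : ∀ S ∈ E, S v = 0 := by
      intro S hS
      have hSadj : LinearMap.adjoint S ∈ E := hadjE _ hS
      have hrep : LinearMap.adjoint S = ∑ k, bE.repr ⟨LinearMap.adjoint S, hSadj⟩ k • z k := by
        have h := bE.sum_repr ⟨LinearMap.adjoint S, hSadj⟩
        calc LinearMap.adjoint S
            = ((⟨LinearMap.adjoint S, hSadj⟩ : ↥E) : V →ₗ[ℂ] V) := rfl
          _ = ((∑ k, bE.repr ⟨LinearMap.adjoint S, hSadj⟩ k • bE k : ↥E) : V →ₗ[ℂ] V) := by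
              rw [h]
          _ = ∑ k, bE.repr ⟨LinearMap.adjoint S, hSadj⟩ k • z k := by
              push_cast [Submodule.coe_sum]
              rfl
      have hS2 : S = ∑ k, (starRingEnd ℂ) (bE.repr ⟨LinearMap.adjoint S, hSadj⟩ k) •
          LinearMap.adjoint (z k) := by
        conv_lhs => rw [← LinearMap.adjoint_adjoint S, hrep]
        rw [map_sum]
        exact Finset.sum_congr rfl fun k _ =>
          map_smulₛₗ (LinearMap.adjoint : (V →ₗ[ℂ] V) ≃ₗ⋆[ℂ] (V →ₗ[ℂ] V)) _ _
      rw [hS2, LinearMap.sum_apply]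
      refine Finset.sum_eq_zero fun k _ => ?_
      rw [LinearMap.smul_apply, h1 k, smul_zero]
    obtain ⟨S, hS, hSv⟩ := hnd v hvne
    exact hSv (h2 S hS)
  -- minimal polynomial argument
  have hint : IsIntegral ℂ T := IsIntegral.of_finite ℂ T
  set p := minpoly ℂ T with hp
  have hpne : p ≠ 0 := minpoly.ne_zero hint
  have hc : p.coeff 0 ≠ 0 := by
    intro h
    have hXdvd : p = Polynomial.X * p.divX := by
      have h2 := Polynomial.X_mul_divX_add p
      rw [h] at h2
      simpa using h2.symm
    have hq0 : p.divX ≠ 0 := fun hq => hpne (by rw [hXdvd, hq, mul_zero])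
    have haev : Polynomial.aeval T p = 0 := minpoly.aeval ℂ T
    rw [hXdvd, map_mul, Polynomial.aeval_X] at haev
    have haev2 : Polynomial.aeval T p.divX = 0 := by
      ext v
      exact hker _ (by
        have := congrArg (fun (S : V →ₗ[ℂ] V) => S v) haev
        simpa using this)
    have hdle := minpoly.degree_le_of_ne_zero ℂ T hq0 haev2
    have hlt : p.divX.degree < p.degree := by
      conv_rhs => rw [hXdvd, mul_comm]
      exact Polynomial.degree_lt_degree_mul_X hq0
    exact absurd hdle (not_le.2 hlt)
  have hkey : T * Polynomial.aeval T p.divX = (-(p.coeff 0)) • 1 := by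
    have h2 := congrArg (Polynomial.aeval T) (Polynomial.X_mul_divX_add p)
    rw [map_add, map_mul, Polynomial.aeval_X, Polynomial.aeval_C, minpoly.aeval,
      Algebra.algebraMap_eq_smul_one] at h2
    have := eq_neg_of_add_eq_zero_left h2
    rw [this, neg_smul]
  have hpow : ∀ i : ℕ, T * T ^ i ∈ E := by
    intro i
    induction i with
    | zero => simpa using hTE
    | succ i ih => rw [pow_succ, ← mul_assoc]; exact hmulE _ ih _ hTE
  have heE : T * Polynomial.aeval T p.divX ∈ E := by
    rw [Polynomial.aeval_eq_sum_range, Finset.mul_sum]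
    refine Submodule.sum_mem _ fun i _ => ?_
    rw [mul_smul_comm]
    exact Submodule.smul_mem _ _ (hpow i)
  refine ⟨(-(p.coeff 0))⁻¹ • (T * Polynomial.aeval T p.divX),
    Submodule.smul_mem _ _ heE, fun v => ?_⟩
  rw [hkey, smul_smul, inv_mul_cancel₀ (neg_ne_zero.2 hc), one_smul]
  exact Module.End.one_apply v

lemma grade_mul_mem_zero {A : Type*} [Ring A] [Algebra ℂ A] {m : ℕ}
    {𝒜 : ZMod m → Submodule ℂ A} [GradedRing 𝒜] {r : ZMod m} {c b : A}
    (hc : c ∈ 𝒜 r) (hb : b ∈ 𝒜 (-r)) : c * b ∈ 𝒜 0 := by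
  have := SetLike.mul_mem_graded hc hb
  rwa [add_neg_cancel] at this

lemma grade_mul_mem_zero' {A : Type*} [Ring A] [Algebra ℂ A] {m : ℕ}
    {𝒜 : ZMod m → Submodule ℂ A} [GradedRing 𝒜] {r : ZMod m} {c b : A}
    (hc : c ∈ 𝒜 (-r)) (hb : b ∈ 𝒜 r) : c * b ∈ 𝒜 0 := by
  have := SetLike.mul_mem_graded hc hb
  rwa [neg_add_cancel] at this

lemma grade_zero_mul_mem {A : Type*} [Ring A] [Algebra ℂ A] {m : ℕ}
    {𝒜 : ZMod m → Submodule ℂ A} [GradedRing 𝒜] {r : ZMod m} {z v : A}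
    (hz : z ∈ 𝒜 0) (hv : v ∈ 𝒜 r) : z * v ∈ 𝒜 r := by
  have := SetLike.mul_mem_graded hz hv
  rwa [zero_add] at this

/-- Left multiplication by a degree-zero element, as an operator on `𝒜 r`. -/
noncomputable def mulOp {A : Type*} [Ring A] [Algebra ℂ A] {m : ℕ}
    (𝒜 : ZMod m → Submodule ℂ A) [GradedRing 𝒜] (r : ZMod m)
    (z : A) (hz : z ∈ 𝒜 0) : ↥(𝒜 r) →ₗ[ℂ] ↥(𝒜 r) where
  toFun v := ⟨z * (v : A), grade_zero_mul_mem hz v.2⟩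
  map_add' u v := by ext; simp [mul_add]
  map_smul' c v := by ext; simp [mul_smul_comm]

@[simp] lemma mulOp_apply_coe {A : Type*} [Ring A] [Algebra ℂ A] {m : ℕ}
    (𝒜 : ZMod m → Submodule ℂ A) [GradedRing 𝒜] (r : ZMod m)
    (z : A) (hz : z ∈ 𝒜 0) (v : ↥(𝒜 r)) :
    ((mulOp 𝒜 r z hz v : ↥(𝒜 r)) : A) = z * (v : A) := rfl

lemma mulOp_mul {A : Type*} [Ring A] [Algebra ℂ A] {m : ℕ}
    (𝒜 : ZMod m → Submodule ℂ A) [GradedRing 𝒜] (r : ZMod m)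
    (z z' : A) (hz : z ∈ 𝒜 0) (hz' : z' ∈ 𝒜 0) :
    mulOp 𝒜 r z hz * mulOp 𝒜 r z' hz' =
      mulOp 𝒜 r (z * z') (grade_zero_mul_mem hz (by simpa using hz')) := by
  ext v
  simp [mulOp, mul_assoc]

lemma grade_mul_zero_mem {A : Type*} [Ring A] [Algebra ℂ A] {m : ℕ}
    {𝒜 : ZMod m → Submodule ℂ A} [GradedRing 𝒜] {r : ZMod m} {c z : A}
    (hc : c ∈ 𝒜 r) (hz : z ∈ 𝒜 0) : c * z ∈ 𝒜 r := by
  have := SetLike.mul_mem_graded hc hz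
  rwa [add_zero] at this

lemma mulOp_congr {A : Type*} [Ring A] [Algebra ℂ A] {m : ℕ}
    (𝒜 : ZMod m → Submodule ℂ A) [GradedRing 𝒜] (r : ZMod m)
    {z z' : A} (h : z = z') (hz : z ∈ 𝒜 0) :
    mulOp 𝒜 r z hz = mulOp 𝒜 r z' (h ▸ hz) := by subst h; rfl

/-- Key consequence of the Frobenius-⋆ structure: there is a family
`c k ∈ 𝒜 r`, `b k ∈ 𝒜 (-r)` with `∑ k, c k * (b k * a) = a` for all `a ∈ 𝒜 r`. -/
lemma exists_unit_family
    {A : Type*} [Ring A] [Algebra ℂ A] [FiniteDimensional ℂ A]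
    {m : ℕ} (𝒜 : ZMod m → Submodule ℂ A) [GradedRing 𝒜]
    (st : A → A)
    (hadd : ∀ a b : A, st (a + b) = st a + st b)
    (hinv : ∀ a : A, st (st a) = a)
    (hmul : ∀ a b : A, st (a * b) = st b * st a)
    (hsmul : ∀ (c : ℂ) (a : A), st (c • a) = (starRingEnd ℂ c) • st a)
    (hstgr : ∀ r : ZMod m, ∀ a ∈ 𝒜 r, st a ∈ 𝒜 (-r))
    (l : A →ₗ[ℂ] ℂ)
    (hclass0 : ∀ a ∈ 𝒜 0, ∀ b ∈ 𝒜 0, l (a * b) = l (b * a))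
    (hherm : ∀ a b : A, l (b * st a) = starRingEnd ℂ (l (a * st b)))
    (hpos : ∀ a : A, a ≠ 0 → 0 < (l (a * st a)).re)
    (r : ZMod m) :
    ∃ (n : ℕ) (c b : Fin n → A), (∀ k, c k ∈ 𝒜 r) ∧ (∀ k, b k ∈ 𝒜 (-r)) ∧
      (∀ a ∈ 𝒜 r, ∑ k, c k * (b k * a) = a) := by
  classical
  -- positive-definiteness helper
  have hdef : ∀ w : A, st w = w → l (w * w) = 0 → w = 0 := by
    intro w hw hl
    by_contra hne
    have := hpos w hne
    rw [hw, hl] at this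
    simp at this
  -- the inner product space structure on 𝒜 r
  letI core : InnerProductSpace.Core ℂ ↥(𝒜 r) :=
    { inner := fun x y => l (((y : A)) * st (x : A))
      conj_inner_symm := fun x y => (hherm (x : A) (y : A)).symm
      re_inner_nonneg := by
        intro x
        by_cases hx : (x : A) = 0
        · simp [hx]
        · exact le_of_lt (hpos _ hx)
      add_left := by
        intro x y zz
        simp only [Submodule.coe_add, hadd, mul_add, map_add]
      smul_left := by
        intro x y c
        simp only [SetLike.val_smul, hsmul, mul_smul_comm, map_smul, smul_eq_mul]
      definite := by
        intro x hx
        by_contra hne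
        have hcne : (x : A) ≠ 0 := fun h => hne (Subtype.ext h)
        have := hpos _ hcne
        rw [show l ((x : A) * st (x : A)) = 0 from hx] at this
        simp at this }
  letI : NormedAddCommGroup ↥(𝒜 r) := core.toNormedAddCommGroup
  letI : InnerProductSpace ℂ ↥(𝒜 r) := InnerProductSpace.ofCore core.toCore
  have hinner_def : ∀ x y : ↥(𝒜 r), ⟪x, y⟫_ℂ = l (((y : A)) * st (x : A)) :=
    fun x y => rfl
  -- the operator system
  set genset : Set (↥(𝒜 r) →ₗ[ℂ] ↥(𝒜 r)) :=
    {T | ∃ (c b : A) (hc : c ∈ 𝒜 r) (hb : b ∈ 𝒜 (-r)),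
      T = mulOp 𝒜 r (c * b) (grade_mul_mem_zero hc hb)} with hgenset
  set E : Submodule ℂ (↥(𝒜 r) →ₗ[ℂ] ↥(𝒜 r)) := Submodule.span ℂ genset with hE
  -- adjoints of multiplication operators
  have hadjop : ∀ (z : A) (hz : z ∈ 𝒜 0) (hstz : st z ∈ 𝒜 0),
      LinearMap.adjoint (mulOp 𝒜 r z hz) = mulOp 𝒜 r (st z) hstz := by
    intro z hz hstz
    refine ((LinearMap.eq_adjoint_iff _ _).2 ?_).symm
    intro x y
    rw [hinner_def, hinner_def]
    have h1 : ((y : A)) * st ((mulOp 𝒜 r (st z) hstz x : ↥(𝒜 r)) : A)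
        = ((y : A) * st (x : A)) * z := by
      rw [mulOp_apply_coe, hmul, hinv, mul_assoc]
    have h2 : ((mulOp 𝒜 r z hz y : ↥(𝒜 r)) : A) * st (x : A)
        = z * ((y : A) * st (x : A)) := by
      rw [mulOp_apply_coe, mul_assoc]
    rw [h1, h2]
    exact hclass0 _ (grade_mul_mem_zero y.2 (hstgr r _ x.2)) z hz
  have hmulE : ∀ T ∈ E, ∀ S ∈ E, T * S ∈ E := by
    intro T hT S hS
    refine Submodule.span_induction₂ (p := fun T S _ _ => T * S ∈ E)
      ?_ ?_ ?_ ?_ ?_ ?_ ?_ hT hS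
    · rintro T S ⟨c, b, hc, hb, rfl⟩ ⟨c', b', hc', hb', rfl⟩
      rw [mulOp_mul]
      have key : (c * b) * (c' * b') = (c * (b * c')) * b' := by
        rw [mul_assoc, mul_assoc, mul_assoc]
      rw [mulOp_congr 𝒜 r key]
      exact Submodule.subset_span
        ⟨c * (b * c'), b', grade_mul_zero_mem hc (grade_mul_mem_zero' hb hc'),
          hb', rfl⟩
    · intro y _; rw [zero_mul]; exact zero_mem _
    · intro x _; rw [mul_zero]; exact zero_mem _
    · intro x y z _ _ _ ih ih'; rw [add_mul]; exact add_mem ih ih'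
    · intro x y z _ _ _ ih ih'; rw [mul_add]; exact add_mem ih ih'
    · intro cc x y _ _ ih; rw [smul_mul_assoc]; exact Submodule.smul_mem _ _ ih
    · intro cc x y _ _ ih; rw [mul_smul_comm]; exact Submodule.smul_mem _ _ ih
  -- E is adjoint-closed
  have hadjE : ∀ T ∈ E, LinearMap.adjoint T ∈ E := by
    intro T hT
    induction hT using Submodule.span_induction with
    | mem T hTg =>
      obtain ⟨c, b, hc, hb, rfl⟩ := hTg
      have hstz : st (c * b) ∈ 𝒜 0 := by
        have := hstgr 0 _ (grade_mul_mem_zero hc hb)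
        rwa [neg_zero] at this
      rw [hadjop _ _ hstz]
      have hstb : st b ∈ 𝒜 r := by
        have := hstgr _ _ hb
        rwa [neg_neg] at this
      have key : st (c * b) = st b * st c := hmul c b
      rw [mulOp_congr 𝒜 r key]
      exact Submodule.subset_span ⟨st b, st c, hstb, hstgr r c hc, rfl⟩
    | zero =>
      have h0 : LinearMap.adjoint (0 : ↥(𝒜 r) →ₗ[ℂ] ↥(𝒜 r)) = 0 :=
        map_zero (LinearMap.adjoint :
          (↥(𝒜 r) →ₗ[ℂ] ↥(𝒜 r)) ≃ₗ⋆[ℂ] (↥(𝒜 r) →ₗ[ℂ] ↥(𝒜 r)))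
      rw [h0]; exact zero_mem _
    | add x y _ _ ih ih' =>
      have h0 : LinearMap.adjoint (x + y) = LinearMap.adjoint x + LinearMap.adjoint y :=
        map_add (LinearMap.adjoint :
          (↥(𝒜 r) →ₗ[ℂ] ↥(𝒜 r)) ≃ₗ⋆[ℂ] (↥(𝒜 r) →ₗ[ℂ] ↥(𝒜 r))) x y
      rw [h0]; exact add_mem ih ih'
    | smul c x _ ih =>
      rw [map_smulₛₗ (LinearMap.adjoint :
        (↥(𝒜 r) →ₗ[ℂ] ↥(𝒜 r)) ≃ₗ⋆[ℂ] (↥(𝒜 r) →ₗ[ℂ] ↥(𝒜 r)))]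
      exact Submodule.smul_mem _ _ ih
  -- nondegeneracy
  have hnd : ∀ v : ↥(𝒜 r), v ≠ 0 → ∃ T ∈ E, T v ≠ 0 := by
    intro v hv
    have hvc : (v : A) ≠ 0 := fun h => hv (Subtype.ext h)
    refine ⟨mulOp 𝒜 r ((v : A) * st (v : A))
      (grade_mul_mem_zero v.2 (hstgr r _ v.2)),
      Submodule.subset_span ⟨(v : A), st (v : A), v.2, hstgr r _ v.2, rfl⟩, ?_⟩
    intro h0
    have h0c : ((v : A) * st (v : A)) * (v : A) = 0 := by
      have := congrArg (fun w : ↥(𝒜 r) => (w : A)) h0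
      simpa using this
    have hstw : st ((v : A) * st (v : A)) = (v : A) * st (v : A) := by
      rw [hmul, hinv]
    have hww : ((v : A) * st (v : A)) * ((v : A) * st (v : A)) = 0 := by
      rw [← mul_assoc, h0c, zero_mul]
    have hw0 : (v : A) * st (v : A) = 0 :=
      hdef _ hstw (by rw [hww, map_zero])
    have hcontra := hpos _ hvc
    rw [hw0, map_zero] at hcontra
    simp at hcontra
  -- the unit of the operator system
  obtain ⟨e, heE, hid⟩ := star_closed_algebra_has_unit E hmulE hadjE hnd
  obtain ⟨n, f, g, hsum⟩ := Submodule.mem_span_set'.1 (hE ▸ heE)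
  choose cc bb hcc hbb hTeq using fun k : Fin n => (g k).2
  refine ⟨n, fun k => f k • cc k, fun k => bb k,
    fun k => Submodule.smul_mem _ _ (hcc k), hbb, ?_⟩
  intro a ha
  have h1 : (((∑ k, f k • ((g k : ↥(𝒜 r) →ₗ[ℂ] ↥(𝒜 r)))) (⟨a, ha⟩ : ↥(𝒜 r)) :
      ↥(𝒜 r)) : A) = a := by
    rw [hsum, hid ⟨a, ha⟩]
  have h2 : (((∑ k, f k • ((g k : ↥(𝒜 r) →ₗ[ℂ] ↥(𝒜 r)))) (⟨a, ha⟩ : ↥(𝒜 r)) :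
      ↥(𝒜 r)) : A) = ∑ k, f k • ((cc k * bb k) * a) := by
    rw [LinearMap.sum_apply, Submodule.coe_sum]
    refine Finset.sum_congr rfl fun k _ => ?_
    rw [LinearMap.smul_apply, Submodule.coe_smul]
    congr 1
    rw [hTeq k, mulOp_apply_coe]
  have h3 : ∀ k, (f k • cc k) * (bb k * a) = f k • ((cc k * bb k) * a) := by
    intro k
    rw [smul_mul_assoc, mul_assoc]
  calc ∑ k, (f k • cc k) * (bb k * a) = ∑ k, f k • ((cc k * bb k) * a) :=
        Finset.sum_congr rfl fun k _ => h3 k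
    _ = a := by rw [← h2, h1]

-- (aux1, aux2 go above)

section MainAux

variable {A : Type*} [Ring A] [Algebra ℂ A] {m : ℕ}
  (𝒜 : ZMod m → Submodule ℂ A) [GradedRing 𝒜]
  (M : Type*) [AddCommGroup M] [Module ℂ M] [Module (𝒜 0) M]
  [IsScalarTower ℂ (𝒜 0) M]

lemma gradeZero_smul_comm (z : ↥(𝒜 0)) (c : ℂ) (mm : M) :
    z • (c • mm) = c • (z • mm) := by
  have h1 : c • mm = (c • (1 : ↥(𝒜 0))) • mm := by rw [smul_assoc, one_smul]
  have h2 : z * (c • (1 : ↥(𝒜 0))) = c • z := by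
    rw [mul_smul_comm, mul_one]
  rw [h1, ← mul_smul, h2, smul_assoc]

/-- Grade zero projection. -/
noncomputable def piZero (a : A) : ↥(𝒜 0) := DirectSum.decompose 𝒜 a 0

lemma piZero_add (a a' : A) : piZero 𝒜 (a + a') = piZero 𝒜 a + piZero 𝒜 a' := by
  unfold piZero
  rw [DirectSum.decompose_add, DirectSum.add_apply]

lemma piZero_smul (c : ℂ) (a : A) : piZero 𝒜 (c • a) = c • piZero 𝒜 a := by
  unfold piZero
  rw [DirectSum.decompose_smul]
  rfl

lemma piZero_of_mem {a : A} (ha : a ∈ 𝒜 0) : piZero 𝒜 a = ⟨a, ha⟩ :=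
  Subtype.ext (DirectSum.decompose_of_mem_same 𝒜 ha)

lemma piZero_mul (a : A) (b : ↥(𝒜 0)) :
    piZero 𝒜 (a * (b : A)) = piZero 𝒜 a * b := by
  induction a using DirectSum.Decomposition.inductionOn 𝒜 with
  | zero =>
    rw [zero_mul]
    have : piZero 𝒜 (0 : A) = 0 := by
      unfold piZero; rw [DirectSum.decompose_zero]; rfl
    rw [this, zero_mul]
  | homogeneous x =>
    rename_i i
    by_cases hi : i = 0
    · subst hi
      have hx : (x : A) ∈ 𝒜 0 := x.2
      have hxb : (x : A) * (b : A) ∈ 𝒜 0 := grade_mul_zero_mem hx b.2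
      rw [piZero_of_mem 𝒜 hxb, piZero_of_mem 𝒜 hx]
      rfl
    · have hx : (x : A) ∈ 𝒜 i := x.2
      have hxb : (x : A) * (b : A) ∈ 𝒜 i := grade_mul_zero_mem hx b.2
      have h1 : piZero 𝒜 ((x : A) * (b : A)) = 0 :=
        Subtype.ext (DirectSum.decompose_of_mem_ne 𝒜 hxb hi)
      have h2 : piZero 𝒜 (x : A) = 0 :=
        Subtype.ext (DirectSum.decompose_of_mem_ne 𝒜 hx hi)
      rw [h1, h2, zero_mul]
  | add x y hx hy =>
    rw [add_mul, piZero_add, piZero_add, hx, hy, add_mul]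

/-- The contraction `A ⊗[ℂ] M → M`, `a ⊗ m ↦ π₀(a) • m`. -/
noncomputable def phi : (A ⊗[ℂ] M) →ₗ[ℂ] M :=
  TensorProduct.lift (LinearMap.mk₂ ℂ (fun a mm => piZero 𝒜 a • mm)
    (fun a a' mm => by rw [piZero_add, add_smul])
    (fun c a mm => by rw [piZero_smul, smul_assoc])
    (fun a mm mm' => smul_add _ _ _)
    (fun c a mm => gradeZero_smul_comm 𝒜 M _ c mm))

@[simp] lemma phi_tmul (a : A) (mm : M) :
    phi 𝒜 M (a ⊗ₜ[ℂ] mm) = piZero 𝒜 a • mm := rfl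

lemma phi_vanish : ∀ y ∈ relSub 𝒜 M, phi 𝒜 M y = 0 := by
  classical
  set S : Set (A ⊗[ℂ] M) :=
    {x | ∃ (a : A) (b : 𝒜 0) (mm : M),
      x = (a * (b : A)) ⊗ₜ[ℂ] mm - a ⊗ₜ[ℂ] (b • mm)} with hS
  have hstab : ∀ (c : A) y, y ∈ Submodule.span ℂ S → c • y ∈ Submodule.span ℂ S := by
    intro c y hy
    induction hy using Submodule.span_induction with
    | mem y hyS =>
      obtain ⟨a, b, mm, rfl⟩ := hyS
      refine Submodule.subset_span ⟨c * a, b, mm, ?_⟩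
      rw [smul_sub, TensorProduct.smul_tmul', TensorProduct.smul_tmul',
        smul_eq_mul, smul_eq_mul, mul_assoc]
    | zero => rw [smul_zero]; exact zero_mem _
    | add y z _ _ ihy ihz => rw [smul_add]; exact add_mem ihy ihz
    | smul k y _ ih =>
      have h1 : k • y = (k • (1 : A)) • y := by rw [smul_assoc, one_smul]
      have h2 : c * (k • (1 : A)) = k • c := by rw [mul_smul_comm, mul_one]
      rw [h1, ← mul_smul, h2, smul_assoc]
      exact Submodule.smul_mem _ _ ih
  have hsub : ∀ y ∈ relSub 𝒜 M, y ∈ Submodule.span ℂ S := by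
    intro y hy
    let T0 : Submodule A (A ⊗[ℂ] M) :=
      { carrier := (Submodule.span ℂ S : Set (A ⊗[ℂ] M))
        add_mem' := fun ha hb => add_mem ha hb
        zero_mem' := zero_mem _
        smul_mem' := fun c y hy => hstab c y hy }
    have : relSub 𝒜 M ≤ T0 := Submodule.span_le.2 fun y hyS => Submodule.subset_span hyS
    exact this hy
  have hall : ∀ y ∈ Submodule.span ℂ S, phi 𝒜 M y = 0 := by
    intro y hy
    induction hy using Submodule.span_induction with
    | mem y hyS =>
      obtain ⟨a, b, mm, rfl⟩ := hyS
      rw [map_sub, phi_tmul, phi_tmul, piZero_mul, mul_smul, sub_self]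
    | zero => rw [map_zero]
    | add y z _ _ ihy ihz => rw [map_add, ihy, ihz, add_zero]
    | smul k y _ ih => rw [map_smul, ih, smul_zero]
  exact fun y hy => hall y (hsub y hy)

end MainAux

/-- Let `A` be a `ℤ/mℤ`-graded Frobenius ⋆-algebra and `M` any left
`A₀`-module.  Then the null socle of the graded `A`-module `A ⊗_{A₀} M` is zero: any
graded `A`-submodule `U` of `A ⊗_{A₀} M` with `U₀ = 0` is the zero submodule. -/
theorem graded_frobenius_star_null_socle_of_induced
    {A : Type*} [Ring A] [Algebra ℂ A] [FiniteDimensional ℂ A]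
    {m : ℕ} [NeZero m]
    (𝒜 : ZMod m → Submodule ℂ A) [GradedRing 𝒜]
    (st : A → A)
    (hadd : ∀ a b : A, st (a + b) = st a + st b)
    (hinv : ∀ a : A, st (st a) = a)
    (hmul : ∀ a b : A, st (a * b) = st b * st a)
    (hsmul : ∀ (c : ℂ) (a : A), st (c • a) = (starRingEnd ℂ c) • st a)
    (hstgr : ∀ r : ZMod m, ∀ a ∈ 𝒜 r, st a ∈ 𝒜 (-r))
    (l : A →ₗ[ℂ] ℂ)
    (hl0 : ∀ r : ZMod m, r ≠ 0 → ∀ a ∈ 𝒜 r, l a = 0)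
    (hclass0 : ∀ a ∈ 𝒜 0, ∀ b ∈ 𝒜 0, l (a * b) = l (b * a))
    (hherm : ∀ a b : A, l (b * st a) = starRingEnd ℂ (l (a * st b)))
    (hpos : ∀ a : A, a ≠ 0 → 0 < (l (a * st a)).re)
    (M : Type*) [AddCommGroup M] [Module ℂ M] [Module (𝒜 0) M]
    [IsScalarTower ℂ (𝒜 0) M]
    (U : Submodule A (IndMod 𝒜 M))
    (hUgraded : U.restrictScalars ℂ =
      ⨆ r : ZMod m, (U.restrictScalars ℂ ⊓ gradePiece 𝒜 M r))
    (hU0 : U.restrictScalars ℂ ⊓ gradePiece 𝒜 M 0 = ⊥) :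
    U = ⊥ := by
  classical
  have key : ∀ r : ZMod m, U.restrictScalars ℂ ⊓ gradePiece 𝒜 M r = ⊥ := by
    intro r
    rw [eq_bot_iff]
    rintro x hx
    rw [Submodule.mem_inf] at hx
    obtain ⟨hxU, hxg⟩ := hx
    rw [Submodule.mem_bot]
    rw [gradePiece] at hxg
    obtain ⟨n, f, g, hsum⟩ := Submodule.mem_span_set'.1 hxg
    choose aa haa mm heq using fun i : Fin n => (g i).2
    set t : A ⊗[ℂ] M := ∑ i, (f i • aa i) ⊗ₜ[ℂ] mm i with ht
    have hxt : x = (relSub 𝒜 M).mkQ t := by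
      rw [← hsum, ht, map_sum]
      refine Finset.sum_congr rfl fun i _ => ?_
      rw [heq i, Submodule.mkQ_apply, Submodule.mkQ_apply,
        ← TensorProduct.smul_tmul', Submodule.Quotient.mk_smul]
    -- the key orthogonality relation
    have hstar : ∀ b ∈ 𝒜 (-r),
        ∑ i, (piZero 𝒜 (b * (f i • aa i))) • mm i = 0 := by
      intro b hb
      have hbt : b • t = ∑ i, (b * (f i • aa i)) ⊗ₜ[ℂ] mm i := by
        rw [ht, Finset.smul_sum]
        refine Finset.sum_congr rfl fun i _ => ?_
        rw [TensorProduct.smul_tmul', smul_eq_mul]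
      have hbxU : b • x ∈ U := U.smul_mem b hxU
      have hbxg : b • x ∈ gradePiece 𝒜 M 0 := by
        rw [hxt, ← LinearMap.map_smul, hbt, map_sum]
        refine Submodule.sum_mem _ fun i _ => Submodule.subset_span ?_
        exact ⟨b * (f i • aa i),
          grade_mul_mem_zero' hb (Submodule.smul_mem _ _ (haa i)), mm i, rfl⟩
      have hmem0 : b • x ∈ U.restrictScalars ℂ ⊓ gradePiece 𝒜 M 0 :=
        Submodule.mem_inf.2 ⟨hbxU, hbxg⟩
      rw [hU0, Submodule.mem_bot] at hmem0
      have hrel : b • t ∈ relSub 𝒜 M := by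
        rw [hxt, ← LinearMap.map_smul, Submodule.mkQ_apply,
          Submodule.Quotient.mk_eq_zero] at hmem0
        exact hmem0
      have hphi := phi_vanish 𝒜 M _ hrel
      rw [hbt, map_sum] at hphi
      simpa using hphi
    -- the unit family
    obtain ⟨n2, cc, bb, hcc, hbb, hfam⟩ := exists_unit_family 𝒜 st hadd hinv
      hmul hsmul hstgr l hclass0 hherm hpos r
    have hz : ∀ (k : Fin n2) (i : Fin n), bb k * (f i • aa i) ∈ 𝒜 0 :=
      fun k i => grade_mul_mem_zero' (hbb k) (Submodule.smul_mem _ _ (haa i))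
    have ht2 : t = ∑ i, ∑ k, (cc k * (bb k * (f i • aa i))) ⊗ₜ[ℂ] mm i := by
      rw [ht]
      refine Finset.sum_congr rfl fun i _ => ?_
      conv_lhs => rw [← hfam (f i • aa i) (Submodule.smul_mem _ _ (haa i))]
      rw [TensorProduct.sum_tmul]
    have hmemrel : t ∈ relSub 𝒜 M := by
      rw [ht2, Finset.sum_comm]
      refine Submodule.sum_mem _ fun k _ => ?_
      have hzero : ∑ i, (⟨bb k * (f i • aa i), hz k i⟩ : ↥(𝒜 0)) • mm i = 0 := by
        have h := hstar (bb k) (hbb k)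
        calc ∑ i, (⟨bb k * (f i • aa i), hz k i⟩ : ↥(𝒜 0)) • mm i
            = ∑ i, (piZero 𝒜 (bb k * (f i • aa i))) • mm i := by
              refine Finset.sum_congr rfl fun i _ => ?_
              rw [piZero_of_mem 𝒜 (hz k i)]
          _ = 0 := h
      have hsplit : ∑ i, (cc k * (bb k * (f i • aa i))) ⊗ₜ[ℂ] mm i
          = ∑ i, ((cc k * (bb k * (f i • aa i))) ⊗ₜ[ℂ] mm i
              - cc k ⊗ₜ[ℂ] ((⟨bb k * (f i • aa i), hz k i⟩ : ↥(𝒜 0)) • mm i)) := by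
        rw [Finset.sum_sub_distrib, ← TensorProduct.tmul_sum, hzero,
          TensorProduct.tmul_zero, sub_zero]
      rw [hsplit]
      refine Submodule.sum_mem _ fun i _ => ?_
      exact Submodule.subset_span
        ⟨cc k, ⟨bb k * (f i • aa i), hz k i⟩, mm i, rfl⟩
    rw [hxt, Submodule.mkQ_apply, Submodule.Quotient.mk_eq_zero]
    exact hmemrel
  have hbot : U.restrictScalars ℂ = ⊥ := by
    rw [hUgraded]
    simp only [key, iSup_bot]
  refine Submodule.restrictScalars_injective ℂ A (IndMod 𝒜 M) ?_
  rw [hbot]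
  rfl
end

section
/- Let A be a semisimple finite-dimensional ℂ-algebra and B ⊆ A a semisimple subalgebra. Then the centralizer Z_B(A) = {a ∈ A : ab = ba for all b ∈ B} is isomorphic as an algebra to ⊕_{(U,V)} End(Hom_B(U, V)), where the sum runs over pairs (U, V) with U a simple B-module, V a simple A-module, and Hom_B(U, V) ≠ 0. In particular, Z_B(A) is semisimple and its simple modules are exactly the nonzero multiplicity spaces Hom_B(U, V). -/
set_option maxHeartbeats 1000000
set_option synthInstance.maxHeartbeats 400000


/-- scalar multiplication by `z : ℂ` as an `R`-linear endomorphism. -/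
def zsmulR {R M : Type*} [Ring R] [Algebra ℂ R] [AddCommGroup M] [Module ℂ M] [Module R M]
    [IsScalarTower ℂ R M] (z : ℂ) : M →ₗ[R] M where
  toFun v := z • v
  map_add' := smul_add z
  map_smul' r v := by
    simp only [RingHom.id_apply]
    rw [← algebraMap_smul R z v, ← algebraMap_smul R z (r • v), smul_smul, smul_smul,
      Algebra.commutes]

lemma schur_scalar {R M : Type*} [Ring R] [Algebra ℂ R] [AddCommGroup M] [Module ℂ M] [Module R M]
    [IsScalarTower ℂ R M] [FiniteDimensional ℂ M] [IsSimpleModule R M] (φ : M →ₗ[R] M) :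
    ∃ z : ℂ, ∀ v, φ v = z • v := by
  have : Nontrivial M := IsSimpleModule.nontrivial R M
  let φc : M →ₗ[ℂ] M := φ.restrictScalars ℂ
  obtain ⟨z, hz⟩ := Module.End.exists_eigenvalue φc
  obtain ⟨v, hv⟩ := hz.exists_hasEigenvector
  refine ⟨z, fun w => ?_⟩
  set ψ : M →ₗ[R] M := φ - zsmulR z with hψ
  have heig : φ v = z • v := by simpa [φc] using hv.apply_eq_smul
  have h0 : ψ v = 0 := by
    simp only [hψ, LinearMap.sub_apply]
    simp [zsmulR, heig]
  rcases LinearMap.injective_or_eq_zero ψ with h | h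
  · have : v = 0 := by
      apply h; simpa using h0
    exact absurd this hv.right
  · have := DFunLike.congr_fun h w
    simp only [hψ, LinearMap.sub_apply, LinearMap.zero_apply] at this
    have := sub_eq_zero.mp this
    simpa [zsmulR] using this

lemma fd_of_simple {R M : Type*} [Ring R] [Algebra ℂ R] [FiniteDimensional ℂ R] [AddCommGroup M]
    [Module ℂ M] [Module R M] [IsScalarTower ℂ R M] [IsSimpleModule R M] :
    FiniteDimensional ℂ M := by
  have : Nontrivial M := IsSimpleModule.nontrivial R M
  obtain ⟨m, hm⟩ := exists_ne (0 : M)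
  have hsurj := IsSimpleModule.toSpanSingleton_surjective R (M := M) hm
  exact Module.Finite.of_surjective ((LinearMap.toSpanSingleton R M m).restrictScalars ℂ) hsurj

/-- Jacobson density for semisimple rings, finite version. -/
lemma density_aux {A : Type*} [Ring A] [IsSemisimpleRing A] {M : Type*} [AddCommGroup M]
    [Module ℂ M] [Module A M] {n : ℕ} (m : Fin n → M) (f : M →ₗ[ℂ] M)
    (hf : ∀ (ψ : M →ₗ[A] M) (v : M), f (ψ v) = ψ (f v)) :
    ∃ a : A, ∀ k, a • m k = f (m k) := by
  classical
  set N : Submodule A (Fin n → M) := Submodule.span A {m} with hN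
  obtain ⟨N', hc⟩ := exists_isCompl N
  set π : (Fin n → M) →ₗ[A] (Fin n → M) := N.subtype ∘ₗ Submodule.projectionOnto N N' hc
    with hπdef
  have hπN : ∀ x ∈ N, π x = x := by
    intro x hx
    simp only [hπdef, LinearMap.comp_apply]
    rw [Submodule.linearProjOfIsCompl_apply_left hc ⟨x, hx⟩]
    rfl
  have hπmem : ∀ x, π x ∈ N := fun x => (Submodule.projectionOnto N N' hc x).2
  set F : (Fin n → M) → (Fin n → M) := fun v k => f (v k) with hF
  have key : ∀ v, F (π v) = π (F v) := by
    intro v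
    funext k
    have hv : ∀ w : Fin n → M, π w = ∑ l, π (Pi.single l (w l)) := by
      intro w
      conv_lhs => rw [← Finset.univ_sum_single w]
      rw [map_sum]
    have lhs : F (π v) k = ∑ l, f ((π (Pi.single l (v l))) k) := by
      simp only [hF]
      rw [hv v]
      simp [Finset.sum_apply]
    have step : ∀ l, f ((π (Pi.single l (v l))) k) = (π (Pi.single l (f (v l)))) k := by
      intro l
      have := hf ((LinearMap.proj k) ∘ₗ π ∘ₗ (LinearMap.single A (fun _ => M) l)) (v l)
      simpa using this
    rw [lhs]
    simp only [step]
    rw [hv (F v)]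
    simp [Finset.sum_apply, hF]
  have hm : m ∈ N := Submodule.mem_span_singleton_self m
  have hFm : F m ∈ N := by
    have : F m = π (F m) := by
      conv_lhs => rw [← hπN m hm]
      rw [key m]
    rw [this]; exact hπmem _
  rw [hN, Submodule.mem_span_singleton] at hFm
  obtain ⟨a, ha⟩ := hFm
  exact ⟨a, fun k => by
    have := congrFun ha k
    simpa [hF] using this⟩

/-- Faithfulness: an element acting as zero on every simple module (up to the complete
family `V`) is zero. -/
lemma faithful_aux {A : Type*} [Ring A] [Algebra ℂ A] [FiniteDimensional ℂ A]
    [IsSemisimpleRing A] {ιV : Type} (V : ιV → Type)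
    [∀ j, AddCommGroup (V j)] [∀ j, Module A (V j)]
    (hVcompl : ∀ (W : Type) [AddCommGroup W] [Module A W],
      IsSimpleModule A W → ∃ j, Nonempty (V j ≃ₗ[A] W))
    (d : A) (hd : ∀ j (v : V j), d • v = 0) : d = 0 := by
  have htop : (1 : A) ∈ sSup {m : Submodule A A | IsSimpleModule A m} := by
    rw [IsSemisimpleModule.sSup_simples_eq_top]; trivial
  rw [sSup_eq_iSup'] at htop
  have : d * 1 = 0 := by
    refine Submodule.iSup_induction (motive := fun a => d * a = 0) _ htop ?_ (by simp) ?_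
    · rintro ⟨S, hS⟩ x hx
      have : IsSimpleModule A S := hS
      -- move to Type 0
      have : Small.{0} (↥S) := by
        have : Small.{0} A :=
          small_of_injective (f := fun a : A => ((Module.finBasis ℂ A).equivFun a : Fin _ → ℂ))
            (Module.finBasis ℂ A).equivFun.injective
        exact small_of_injective (f := fun s : S => (s : A)) Subtype.val_injective
      obtain ⟨j, ⟨e⟩⟩ := hVcompl (Shrink ↥S)
        (IsSimpleModule.congr (Shrink.linearEquiv A ↥S))
      -- d • anything in S is zero
      set e' : V j ≃ₗ[A] ↥S := e.trans (Shrink.linearEquiv A ↥S)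
      have : d • (⟨x, hx⟩ : ↥S) = 0 := by
        rw [← e'.apply_symm_apply ⟨x, hx⟩, ← map_smul, hd, map_zero]
      have := congrArg (Subtype.val) this
      simpa [smul_eq_mul] using this
    · intro x y hx hy
      rw [mul_add, hx, hy, add_zero]
  simpa using this

lemma simple_implies_semisimple {R M : Type*} [Ring R] [AddCommGroup M] [Module R M]
    [h : IsSimpleModule R M] : IsSemisimpleModule R M := by
  apply IsSemisimpleModule.of_sSup_simples_eq_top
  have : (⊤ : Submodule R M) ∈ {m : Submodule R M | IsSimpleModule R m} := by
    exact IsSimpleModule.congr Submodule.topEquiv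
  exact top_le_iff.mp (le_sSup this)

lemma isSimpleModule_end (W : Type*) [AddCommGroup W] [Module ℂ W] [Nontrivial W] :
    IsSimpleModule (Module.End ℂ W) W := by
  obtain ⟨w₀, hw₀⟩ := exists_ne (0 : W)
  have hnt : Nontrivial (Submodule (Module.End ℂ W) W) := by
    refine nontrivial_of_ne ⊥ ⊤ fun h => ?_
    have : w₀ ∈ (⊤ : Submodule (Module.End ℂ W) W) := trivial
    rw [← h, Submodule.mem_bot] at this
    exact hw₀ this
  refine (isSimpleModule_iff _ _).mpr ⟨fun N => ?_⟩
  rcases eq_or_ne N ⊥ with h | h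
  · exact Or.inl h
  · refine Or.inr ?_
    obtain ⟨w, hwN, hw⟩ := Submodule.exists_mem_ne_zero_of_ne_bot h
    rw [eq_top_iff]
    intro w' _
    obtain ⟨N', hc⟩ := Submodule.exists_isCompl (Submodule.span ℂ {w})
    set φ : Module.End ℂ W :=
      (LinearMap.toSpanSingleton ℂ W w') ∘ₗ
        ((LinearEquiv.toSpanNonzeroSingleton ℂ W w hw).symm : Submodule.span ℂ {w} →ₗ[ℂ] ℂ) ∘ₗ
        Submodule.projectionOnto _ N' hc with hφ
    have hφw : φ w = w' := by
      have h1 : Submodule.projectionOnto _ N' hc w =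
          ⟨w, Submodule.mem_span_singleton_self w⟩ :=
        Submodule.linearProjOfIsCompl_apply_left hc ⟨w, Submodule.mem_span_singleton_self w⟩
      have h2 : (LinearEquiv.toSpanNonzeroSingleton ℂ W w hw).symm
          ⟨w, Submodule.mem_span_singleton_self w⟩ = 1 := by
        rw [LinearEquiv.symm_apply_eq]
        exact (LinearEquiv.toSpanNonzeroSingleton_one ℂ W w hw).symm
      simp [hφ, h1, h2]
    have : φ • w ∈ N := N.smul_mem φ hwN
    rwa [show φ • w = φ w from rfl, hφw] at this

lemma end_semisimple (W : Type*) [AddCommGroup W] [Module ℂ W] [FiniteDimensional ℂ W]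
    [Nontrivial W] : IsSemisimpleRing (Module.End ℂ W) := by
  classical
  set E := Module.End ℂ W with hE
  have hsimple : IsSimpleModule E W := isSimpleModule_end W
  set b := Module.finBasis ℂ W with hb
  set n := Module.finrank ℂ W with hn
  set LL : E →ₗ[E] (Fin n → W) :=
    { toFun := fun φ k => φ (b k)
      map_add' := fun φ ψ => rfl
      map_smul' := fun ψ φ => rfl } with hLL
  have hinj : Function.Injective LL := by
    intro φ ψ h
    refine b.ext fun k => ?_
    exact congrFun h k
  have hsurj : Function.Surjective LL := by
    intro v
    refine ⟨b.constr ℂ v, ?_⟩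
    funext k
    simp only [hLL, LinearMap.coe_mk, AddHom.coe_mk]
    exact b.constr_basis ℂ v k
  have hss : IsSemisimpleModule E (Fin n → W) := by
    refine isSemisimpleModule_of_isSemisimpleModule_submodule'
      (p := fun k => LinearMap.range (LinearMap.single E (fun _ : Fin n => W) k)) ?_ ?_
    · intro k
      have : IsSemisimpleModule E W := simple_implies_semisimple
      exact IsSemisimpleModule.congr
        (LinearEquiv.ofInjective (LinearMap.single E (fun _ : Fin n => W) k)
          (by rw [LinearMap.coe_single]; exact Pi.single_injective k)).symm
    · rw [eq_top_iff]
      intro x _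
      rw [← Finset.univ_sum_single x]
      refine Submodule.sum_mem _ fun k _ => ?_
      exact Submodule.mem_iSup_of_mem k ⟨x k, rfl⟩
  exact IsSemisimpleModule.congr (LinearEquiv.ofBijective LL ⟨hinj, hsurj⟩)



section LemmaT
variable {B' : Type*} [Ring B'] [Algebra ℂ B'] [FiniteDimensional ℂ B'] [IsSemisimpleRing B']
variable {ιU : Type} [Fintype ιU] (U : ιU → Type)
  [∀ i, AddCommGroup (U i)] [∀ i, Module ℂ (U i)] [∀ i, Module B' (U i)]
  [∀ i, IsScalarTower ℂ B' (U i)] [∀ i, SMulCommClass B' ℂ (U i)] [∀ i, IsSimpleModule B' (U i)]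
variable (V : Type) [AddCommGroup V] [Module ℂ V] [Module B' V] [IsScalarTower ℂ B' V]
  [SMulCommClass B' ℂ V] [FiniteDimensional ℂ V]

lemma exists_T (hUpair : ∀ i j, i ≠ j → ¬ Nonempty (U i ≃ₗ[B'] U j))
    (hUcompl : ∀ (W : Type) [AddCommGroup W] [Module B' W],
      IsSimpleModule B' W → ∃ i, Nonempty (U i ≃ₗ[B'] W))
    (g : ∀ i, Module.End ℂ (U i →ₗ[B'] V)) :
    ∃ T : V →ₗ[B'] V, ∀ i (f : U i →ₗ[B'] V), T ∘ₗ f = g i f := by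
  classical
  have fdU : ∀ i, FiniteDimensional ℂ (U i) := fun i => fd_of_simple (R := B')
  have fdHom : ∀ i, FiniteDimensional ℂ (U i →ₗ[B'] V) := fun i =>
    FiniteDimensional.of_injective (LinearMap.restrictScalarsₗ ℂ B' (U i) V ℂ)
      (LinearMap.restrictScalars_injective ℂ)
  set κ : ιU → Type := fun i => Fin (Module.finrank ℂ (U i →ₗ[B'] V)) with hκ
  set bb : ∀ i, Module.Basis (κ i) ℂ (U i →ₗ[B'] V) := fun i => Module.finBasis ℂ _ with hbb
  set Λ := Σ i : ιU, κ i with hΛ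
  set D := ∀ l : Λ, U l.1 with hD
  set F : ∀ l : Λ, (U l.1 →ₗ[B'] V) := fun l => bb l.1 l.2 with hF
  set Θ : D →ₗ[B'] V := ∑ l : Λ, (F l) ∘ₗ (LinearMap.proj l) with hΘ
  have hΘapply : ∀ d : D, Θ d = ∑ l : Λ, F l (d l) := by
    intro d
    rw [hΘ, LinearMap.sum_apply]
    exact Finset.sum_congr rfl fun l _ => rfl
  have hΘsingle : ∀ (l : Λ) (u : U l.1), Θ (Pi.single l u) = F l u := by
    intro l u
    rw [hΘapply]
    rw [Finset.sum_eq_single l]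
    · rw [Pi.single_eq_same]
    · intro l' _ hne
      rw [Pi.single_eq_of_ne hne, map_zero]
    · intro h; exact absurd (Finset.mem_univ l) h
  have hΘℂ : ∀ (z : ℂ) (d : D), Θ (z • d) = z • Θ d := by
    intro z d
    rw [← algebraMap_smul B' z d, map_smul, algebraMap_smul]
  have hFℂ : ∀ (l : Λ) (z : ℂ) (u : U l.1), F l (z • u) = z • F l u := by
    intro l z u
    rw [← algebraMap_smul B' z u, map_smul, algebraMap_smul]
  -- surjectivity
  have hrange : ∀ i (f : U i →ₗ[B'] V) (u : U i), f u ∈ LinearMap.range Θ := by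
    intro i f u
    have hf := (bb i).sum_repr f
    refine ⟨∑ k : κ i, (((bb i).repr f k) • (Pi.single (⟨i, k⟩ : Λ) u : D) : D), ?_⟩
    rw [map_sum]
    have heach : ∀ k : κ i, Θ (((bb i).repr f k) • (Pi.single (⟨i, k⟩ : Λ) u : D))
        = ((bb i).repr f k) • F ⟨i, k⟩ u := by
      intro k; rw [hΘℂ, hΘsingle]
    simp only [heach]
    conv_rhs => rw [← hf]
    rw [LinearMap.sum_apply]
    simp [hF]
  have hsurj : Function.Surjective Θ := by
    rw [← LinearMap.range_eq_top, eq_top_iff, ← IsSemisimpleModule.sSup_simples_eq_top B' V]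
    refine sSup_le fun S' hS' => ?_
    haveI : IsSimpleModule B' ↥S' := hS'
    obtain ⟨i, ⟨e⟩⟩ := hUcompl ↥S' hS'
    intro x hx
    have hxe : x = (S'.subtype ∘ₗ (e : U i →ₗ[B'] ↥S')) (e.symm ⟨x, hx⟩) := by
      simp
    rw [hxe]
    exact hrange i _ _
  -- injectivity
  have hinj : Function.Injective Θ := by
    rw [← LinearMap.ker_eq_bot]
    by_contra hker
    rcases IsSemisimpleModule.eq_bot_or_exists_simple_le (LinearMap.ker Θ) with h | ⟨N₀, hle, hN₀⟩
    · exact hker h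
    haveI : IsSimpleModule B' ↥N₀ := hN₀
    set p : ∀ l : Λ, (↥N₀ →ₗ[B'] U l.1) := fun l => (LinearMap.proj l) ∘ₗ N₀.subtype with hp
    have hex : ∃ l, p l ≠ 0 := by
      by_contra h
      push_neg at h
      haveI := IsSimpleModule.nontrivial B' ↥N₀
      obtain ⟨n, hn⟩ := exists_ne (0 : ↥N₀)
      apply hn
      ext l
      have := DFunLike.congr_fun (h l) n
      exact this
    obtain ⟨l₀, hl₀⟩ := hex
    have hbij := LinearMap.bijective_of_ne_zero hl₀
    set e : ↥N₀ ≃ₗ[B'] U l₀.1 := LinearEquiv.ofBijective _ hbij with he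
    choose z hz using fun k : κ l₀.1 =>
      schur_scalar ((p ⟨l₀.1, k⟩) ∘ₗ (e.symm : U l₀.1 →ₗ[B'] ↥N₀))
    have hzero : ∀ l : Λ, l.1 ≠ l₀.1 → ∀ u : U l₀.1, p l (e.symm u) = 0 := by
      intro l hne u
      rcases eq_or_ne ((p l) ∘ₗ (e.symm : U l₀.1 →ₗ[B'] ↥N₀)) 0 with h0 | h0
      · have := DFunLike.congr_fun h0 u
        simpa using this
      · exact absurd ⟨LinearEquiv.ofBijective _ (LinearMap.bijective_of_ne_zero h0)⟩
          (hUpair l₀.1 l.1 (Ne.symm hne))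
    have hcomp : ∀ u : U l₀.1, ∑ k : κ l₀.1, z k • (bb l₀.1 k) u = 0 := by
      intro u
      have hmem : ((e.symm u : ↥N₀) : D) ∈ LinearMap.ker Θ := hle (e.symm u).2
      have h0 : Θ ((e.symm u : ↥N₀) : D) = 0 := hmem
      rw [hΘapply] at h0
      have hcoord : ∀ l : Λ, (((e.symm u : ↥N₀) : D) l) = p l (e.symm u) := fun l => rfl
      simp only [hcoord] at h0
      rw [← Finset.univ_sigma_univ, Finset.sum_sigma] at h0
      rw [Finset.sum_eq_single l₀.1] at h0
      · rw [← h0]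
        refine Finset.sum_congr rfl fun k _ => ?_
        have hk := hz k u
        simp only [LinearMap.comp_apply, LinearEquiv.coe_coe] at hk
        rw [hk, hFℂ]
      · intro i _ hne
        refine Finset.sum_eq_zero fun k _ => ?_
        rw [hzero ⟨i, k⟩ hne u, map_zero]
      · intro h; exact absurd (Finset.mem_univ l₀.1) h
    have hsum : ∑ k : κ l₀.1, z k • bb l₀.1 k = 0 := by
      apply LinearMap.ext fun u => ?_
      rw [LinearMap.sum_apply, LinearMap.zero_apply]
      simpa [LinearMap.smul_apply] using hcomp u
    have hz0 : z l₀.2 = 0 :=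
      (Fintype.linearIndependent_iff.mp (bb l₀.1).linearIndependent z hsum) l₀.2
    haveI := IsSimpleModule.nontrivial B' (U l₀.1)
    obtain ⟨u₀, hu₀⟩ := exists_ne (0 : U l₀.1)
    have : u₀ = z l₀.2 • u₀ := by
      have h1 := hz l₀.2 u₀
      simp only [LinearMap.comp_apply, LinearEquiv.coe_coe] at h1
      have h2 : p ⟨l₀.1, l₀.2⟩ (e.symm u₀) = u₀ := by
        show e (e.symm u₀) = u₀
        exact e.apply_symm_apply u₀
      exact h2.symm.trans h1
    rw [hz0, zero_smul] at this
    exact hu₀ this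
  -- construction of T
  set ΘE : D ≃ₗ[B'] V := LinearEquiv.ofBijective Θ ⟨hinj, hsurj⟩ with hΘE
  set T : V →ₗ[B'] V :=
    (∑ l : Λ, (g l.1 (F l)) ∘ₗ (LinearMap.proj l)) ∘ₗ (ΘE.symm : V →ₗ[B'] D) with hT
  have hTℂ : ∀ (zc : ℂ) (v : V), T (zc • v) = zc • T v := by
    intro zc v
    rw [← algebraMap_smul B' zc v, map_smul, algebraMap_smul]
  have hTbasis : ∀ (l : Λ) (u : U l.1), T (F l u) = (g l.1 (F l)) u := by
    intro l u
    have hsymm : ΘE.symm (F l u) = Pi.single l u := by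
      rw [LinearEquiv.symm_apply_eq]
      show F l u = Θ (Pi.single l u)
      exact (hΘsingle l u).symm
    rw [hT]
    simp only [LinearMap.comp_apply]
    rw [show (ΘE.symm : V →ₗ[B'] D) (F l u) = Pi.single l u from hsymm]
    rw [LinearMap.sum_apply]
    rw [Finset.sum_eq_single l]
    · simp [Pi.single_eq_same]
    · intro l' _ hne
      simp [Pi.single_eq_of_ne hne]
    · intro h; exact absurd (Finset.mem_univ l) h
  refine ⟨T, fun i f => ?_⟩
  apply LinearMap.ext fun u => ?_
  rw [LinearMap.comp_apply]
  conv_lhs => rw [← (bb i).sum_repr f]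
  conv_rhs => rw [← (bb i).sum_repr f]
  rw [map_sum, LinearMap.sum_apply, map_sum, LinearMap.sum_apply]
  refine Finset.sum_congr rfl fun k _ => ?_
  rw [LinearMap.smul_apply, hTℂ, map_smul, LinearMap.smul_apply]
  congr 1
  exact hTbasis ⟨i, k⟩ u
end LemmaT

/-- Let `A` be a finite-dimensional semisimple `ℂ`-algebra and `B ⊆ A`
a semisimple subalgebra.  Then the centralizer `Z_B(A)` is isomorphic as a `ℂ`-algebra to
`⊕_{(U,V)} End(Hom_B(U,V))`, the sum over pairs of a simple `B`-module `U` and a simple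
`A`-module `V` with `Hom_B(U,V) ≠ 0`; in particular `Z_B(A)` is semisimple. -/
theorem centralizer_iso_sum_end_hom
    {A : Type*} [Ring A] [Algebra ℂ A] [FiniteDimensional ℂ A] [IsSemisimpleRing A]
    (B : Subalgebra ℂ A) [IsSemisimpleRing B]
    {ιU ιV : Type} [Fintype ιU] [Fintype ιV]
    (U : ιU → Type) [∀ i, AddCommGroup (U i)] [∀ i, Module ℂ (U i)]
    [∀ i, Module B (U i)] [∀ i, IsScalarTower ℂ B (U i)] [∀ i, SMulCommClass B ℂ (U i)]
    [∀ i, IsSimpleModule B (U i)]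
    (hUpair : ∀ i j, i ≠ j → ¬ Nonempty (U i ≃ₗ[B] U j))
    (hUcompl : ∀ (W : Type) [AddCommGroup W] [Module B W],
      IsSimpleModule B W → ∃ i, Nonempty (U i ≃ₗ[B] W))
    (V : ιV → Type) [∀ j, AddCommGroup (V j)] [∀ j, Module ℂ (V j)]
    [∀ j, Module A (V j)] [∀ j, IsScalarTower ℂ A (V j)] [∀ j, SMulCommClass B ℂ (V j)]
    [∀ j, IsSimpleModule A (V j)]
    (hVpair : ∀ i j, i ≠ j → ¬ Nonempty (V i ≃ₗ[A] V j))
    (hVcompl : ∀ (W : Type) [AddCommGroup W] [Module A W],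
      IsSimpleModule A W → ∃ j, Nonempty (V j ≃ₗ[A] W)) :
    Nonempty ((Subalgebra.centralizer ℂ (B : Set A)) ≃ₐ[ℂ]
      ((p : {p : ιU × ιV // ∃ f : U p.1 →ₗ[B] V p.2, f ≠ 0}) →
        Module.End ℂ (U p.1.1 →ₗ[B] V p.1.2))) ∧
    IsSemisimpleRing (Subalgebra.centralizer ℂ (B : Set A)) := by
  classical
  -- scalar tower for the B-action on the V j
  haveI htower : ∀ j, IsScalarTower ℂ B (V j) := fun j => ⟨fun z b v => by
    show ((z • b : B) : A) • v = z • (((b : B) : A) • v)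
    rw [Subalgebra.coe_smul, smul_assoc]⟩
  haveI fdV : ∀ j, FiniteDimensional ℂ (V j) := fun j => fd_of_simple (R := A)
  haveI fdB : FiniteDimensional ℂ B := inferInstance
  haveI fdHom : ∀ i j, FiniteDimensional ℂ (U i →ₗ[B] V j) := fun i j => by
    haveI : FiniteDimensional ℂ (U i) := fd_of_simple (R := (B : Type _))
    exact FiniteDimensional.of_injective (LinearMap.restrictScalarsₗ ℂ B (U i) (V j) ℂ)
      (LinearMap.restrictScalars_injective ℂ)
  set C := Subalgebra.centralizer ℂ (B : Set A) with hC
  -- the action of an element of the centralizer on each V j, as a B-linear map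
  have hBmul : ∀ (c : C) (b : A), b ∈ B → b * (c : A) = (c : A) * b := fun c b hb =>
    (Subalgebra.mem_centralizer_iff ℂ).mp c.2 b hb
  set Lc : C → ∀ j, (V j →ₗ[B] V j) := fun c j =>
    { toFun := fun v => (c : A) • v
      map_add' := fun v w => smul_add _ v w
      map_smul' := fun b v => by
        simp only [RingHom.id_apply]
        show (c : A) • (((b : B) : A) • v) = ((b : B) : A) • ((c : A) • v)
        rw [← mul_smul, ← mul_smul, hBmul c b b.2] } with hLc
  -- complex linearity of B-linear maps on V j
  have hBlinC : ∀ j (L : V j →ₗ[B] V j) (z : ℂ) (v : V j), L (z • v) = z • L v := by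
    intro j L z v
    rw [← algebraMap_smul (B : Type _) z v, map_smul, algebraMap_smul]
  -- surjectivity core
  have core : ∀ (g' : ∀ i j, Module.End ℂ (U i →ₗ[B] V j)),
      ∃ a : A, a ∈ C ∧ ∀ i j (f : U i →ₗ[B] V j) (u : U i), a • f u = (g' i j f) u := by
    intro g'
    have hT : ∀ j, ∃ T : V j →ₗ[B] V j, ∀ i (f : U i →ₗ[B] V j), T ∘ₗ f = (g' i j) f :=
      fun j => exists_T U (V j) hUpair hUcompl (fun i => g' i j)
    choose T hTspec using hT
    set fT : (∀ j, V j) →ₗ[ℂ] (∀ j, V j) :=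
      { toFun := fun v j => T j (v j)
        map_add' := fun v w => by
          funext j
          show T j (v j + w j) = T j (v j) + T j (w j)
          rw [map_add]
        map_smul' := fun z v => by
          funext j
          simp only [RingHom.id_apply, Pi.smul_apply]
          exact hBlinC j (T j) z (v j) } with hfT
    have hcomm : ∀ (ψ : (∀ j, V j) →ₗ[A] (∀ j, V j)) (v : (∀ j, V j)), fT (ψ v) = ψ (fT v) := by
      intro ψ v
      set ψc : ∀ j l, V l →ₗ[A] V j := fun j l =>
        (LinearMap.proj j) ∘ₗ ψ ∘ₗ (LinearMap.single A V l) with hψc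
      have hψ : ∀ (w : (∀ j, V j)) j, ψ w j = ∑ l, ψc j l (w l) := by
        intro w j
        conv_lhs => rw [← Finset.univ_sum_single w, map_sum]
        rw [Finset.sum_apply]
        exact Finset.sum_congr rfl fun l _ => rfl
      have hdiag : ∀ j l, j ≠ l → ψc j l = 0 := by
        intro j l hne
        by_contra h
        exact hVpair l j (Ne.symm hne)
          ⟨LinearEquiv.ofBijective _ (LinearMap.bijective_of_ne_zero h)⟩
      choose zz hzz using fun j => schur_scalar (ψc j j)
      have hψval : ∀ (w : (∀ j, V j)) j, ψ w j = zz j • w j := by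
        intro w j
        rw [hψ w j, Finset.sum_eq_single j]
        · exact hzz j (w j)
        · intro l _ hne
          rw [hdiag j l (Ne.symm hne), LinearMap.zero_apply]
        · intro h; exact absurd (Finset.mem_univ j) h
      funext j
      show T j (ψ v j) = ψ (fT v) j
      rw [hψval v j, hψval (fT v) j]
      exact hBlinC j (T j) (zz j) (v j)
    haveI : FiniteDimensional ℂ (∀ j, V j) := inferInstance
    obtain ⟨a, ha⟩ := density_aux (A := A) (⇑(Module.finBasis ℂ (∀ j, V j))) fT hcomm
    have haall : ∀ v : (∀ j, V j), a • v = fT v := by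
      set La : (∀ j, V j) →ₗ[ℂ] (∀ j, V j) :=
        { toFun := fun v => a • v
          map_add' := fun v w => smul_add a v w
          map_smul' := fun z v => by
            simp only [RingHom.id_apply]
            rw [← algebraMap_smul A z v, ← algebraMap_smul A z (a • v), smul_smul, smul_smul,
              Algebra.commutes] } with hLa
      have : La = fT := (Module.finBasis ℂ (∀ j, V j)).ext fun k => ha k
      exact fun v => DFunLike.congr_fun this v
    have hact : ∀ j (v : V j), a • v = T j v := by
      intro j v
      have h1 := congrFun (haall (Pi.single j v)) j
      simpa [hfT, Pi.smul_apply, Pi.single_eq_same] using h1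
    have haC : a ∈ C := by
      rw [hC, Subalgebra.mem_centralizer_iff]
      intro b hb
      have hz : ∀ j (v : V j), (b * a - a * b) • v = 0 := by
        intro j v
        have h1 : (b * a) • v = b • (T j v) := by rw [mul_smul, hact]
        have h2 : (a * b) • v = b • (T j v) := by
          rw [mul_smul, hact]
          have : b • v = ((⟨b, hb⟩ : B) : A) • v := rfl
          rw [this]
          show T j ((⟨b, hb⟩ : B) • v) = _
          rw [map_smul]
          rfl
        rw [sub_smul, h1, h2, sub_self]
      have h0 := faithful_aux V hVcompl _ hz
      have := sub_eq_zero.mp h0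
      exact this
    refine ⟨a, haC, fun i j f u => ?_⟩
    have h1 := DFunLike.congr_fun (hTspec j i f) u
    rw [LinearMap.comp_apply] at h1
    rw [hact j (f u), h1]
  set P := {p : ιU × ιV // ∃ f : U p.1 →ₗ[B] V p.2, f ≠ 0} with hP
  -- the algebra homomorphism
  set Φ : C →ₐ[ℂ] ((p : P) → Module.End ℂ (U p.1.1 →ₗ[B] V p.1.2)) :=
    { toFun := fun c p =>
        { toFun := fun f => (Lc c p.1.2) ∘ₗ f
          map_add' := fun f f' => by ext u; simp
          map_smul' := fun z f => by
            ext u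
            simp only [LinearMap.comp_apply, LinearMap.smul_apply, RingHom.id_apply]
            exact hBlinC p.1.2 (Lc c p.1.2) z (f u) }
      map_one' := by
        funext p
        refine LinearMap.ext fun f => LinearMap.ext fun u => ?_
        show ((1 : C) : A) • f u = f u
        rw [OneMemClass.coe_one, one_smul]
      map_mul' := fun c c' => by
        funext p
        refine LinearMap.ext fun f => LinearMap.ext fun u => ?_
        show ((c * c' : C) : A) • f u = (c : A) • ((c' : A) • f u)
        rw [MulMemClass.coe_mul, mul_smul]
      map_zero' := by
        funext p
        refine LinearMap.ext fun f => LinearMap.ext fun u => ?_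
        show ((0 : C) : A) • f u = 0
        rw [ZeroMemClass.coe_zero, zero_smul]
      map_add' := fun c c' => by
        funext p
        refine LinearMap.ext fun f => LinearMap.ext fun u => ?_
        show ((c + c' : C) : A) • f u = (c : A) • f u + (c' : A) • f u
        rw [AddMemClass.coe_add, add_smul]
      commutes' := fun z => by
        funext p
        refine LinearMap.ext fun f => LinearMap.ext fun u => ?_
        show ((algebraMap ℂ C z : C) : A) • f u = _
        rw [SetLike.coe_eq_coe.mpr rfl]
        have h1 : ((algebraMap ℂ C z : C) : A) = algebraMap ℂ A z := by
          simp [Subalgebra.algebraMap_eq]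
        rw [h1, algebraMap_smul]
        simp [Pi.algebraMap_apply, Module.algebraMap_end_apply] } with hΦ
  -- injectivity
  have hinj : Function.Injective Φ := by
    rw [injective_iff_map_eq_zero]
    intro c hc0
    have hall : ∀ i j (f : U i →ₗ[B] V j) (u : U i), (c : A) • f u = 0 := by
      intro i j f u
      by_cases hp : ∃ f' : U i →ₗ[B] V j, f' ≠ 0
      · have h1 : Φ c ⟨(i, j), hp⟩ = 0 := congrFun hc0 ⟨(i, j), hp⟩
        have h2 := DFunLike.congr_fun (DFunLike.congr_fun h1 f) u
        exact h2
      · have hf0 : f = 0 := by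
          by_contra h
          exact hp ⟨f, h⟩
        simp [hf0]
    have hkill : ∀ j (v : V j), (c : A) • v = 0 := by
      intro j
      have hker : (⊤ : Submodule B (V j)) ≤ LinearMap.ker (Lc c j) := by
        rw [← IsSemisimpleModule.sSup_simples_eq_top (B : Type _) (V j)]
        refine sSup_le fun S hS => ?_
        haveI : IsSimpleModule B ↥S := hS
        obtain ⟨i, ⟨e⟩⟩ := hUcompl ↥S hS
        intro x hx
        have hxe : x = (S.subtype ∘ₗ (e : U i →ₗ[B] ↥S)) (e.symm ⟨x, hx⟩) := by simp
        rw [LinearMap.mem_ker, hxe]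
        exact hall i j (S.subtype ∘ₗ (e : U i →ₗ[B] ↥S)) (e.symm ⟨x, hx⟩)
      intro v
      exact hker (Submodule.mem_top (x := v))
    exact Subtype.ext (faithful_aux V hVcompl (c : A) hkill)
  -- surjectivity
  have hsurjΦ : Function.Surjective Φ := by
    intro g
    obtain ⟨a, haC, hag⟩ := core (fun i j =>
      if hp : ∃ f : U i →ₗ[B] V j, f ≠ 0 then g ⟨(i, j), hp⟩ else 0)
    refine ⟨⟨a, haC⟩, ?_⟩
    funext p
    refine LinearMap.ext fun f => LinearMap.ext fun u => ?_
    show a • f u = (g p f) u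
    have h1 := hag p.1.1 p.1.2 f u
    rw [h1, dif_pos p.2]
  -- conclusion
  have e : C ≃ₐ[ℂ] ((p : P) → Module.End ℂ (U p.1.1 →ₗ[B] V p.1.2)) :=
    AlgEquiv.ofBijective Φ ⟨hinj, hsurjΦ⟩
  constructor
  · exact ⟨e⟩
  · haveI hpe : ∀ p : P, IsSemisimpleRing (Module.End ℂ (U p.1.1 →ₗ[B] V p.1.2)) := by
      intro p
      haveI : Nontrivial (U p.1.1 →ₗ[B] V p.1.2) := by
        obtain ⟨f, hf⟩ := p.2
        exact nontrivial_of_ne f 0 hf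
      exact end_semisimple _
    exact e.symm.toRingEquiv.isSemisimpleRing
end

section
/- Let G be a finite group and σ ∈ Aut(G) of order m. For ρ ∈ Irr(G) fixed by σ (i.e., ρ ∘ σ ≅ ρ), define the twisted character χ̃_ρ : G → ℂ by χ̃_ρ(g) = χ_{ρ̃}(g, σ), where ρ̃ is an extension of ρ to G̃ = G ⋊ ⟨σ⟩. Then for ρ₁, ρ₂ ∈ Irr(G)^{⟨σ⟩}: (1/|G|) Σ_{g ∈ G} χ̃_{ρ₁}(g) · conj(χ̃_{ρ₂}(g)) equals 1 if ρ₁ ≅ ρ₂ and 0 otherwise (with suitable compatible choices of extensions in the case ρ₁ ≅ ρ₂). -/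
open LinearMap Module Set

section Aux

private lemma twistaux_trace_pow_of_isNilpotent_sub {W : Type*} [AddCommGroup W] [Module ℂ W]
    [FiniteDimensional ℂ W] (r : Module.End ℂ W) (μ : ℂ)
    (h : IsNilpotent (r - algebraMap ℂ (Module.End ℂ W) μ)) (k : ℕ) :
    LinearMap.trace ℂ W (r ^ k) = μ ^ k * (Module.finrank ℂ W : ℂ) := by
  induction k with
  | zero => simp [LinearMap.trace_one]
  | succ k ih =>
    rw [pow_succ, Module.End.mul_eq_comp,
      LinearMap.trace_comp_eq_mul_of_commute_of_isNilpotent μ ((Commute.refl r).pow_left k) h,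
      ih]
    ring

private lemma twistaux_trace_pow_restrict_maxGen {V : Type*} [AddCommGroup V] [Module ℂ V]
    [FiniteDimensional ℂ V] (u : Module.End ℂ V) (μ : ℂ) (k : ℕ)
    (h : MapsTo (u ^ k) (u.maxGenEigenspace μ) (u.maxGenEigenspace μ)) :
    LinearMap.trace ℂ (u.maxGenEigenspace μ) ((u ^ k).restrict h) =
      μ ^ k * (Module.finrank ℂ (u.maxGenEigenspace μ) : ℂ) := by
  have h0 : MapsTo u (u.maxGenEigenspace μ) (u.maxGenEigenspace μ) :=
    Module.End.mapsTo_maxGenEigenspace_of_comm rfl μ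
  have hres : (u ^ k).restrict h = (u.restrict h0) ^ k := by
    exact (Module.End.pow_restrict k h0 h).symm
  rw [hres]
  have hnil : IsNilpotent (u.restrict h0 - algebraMap ℂ _ μ) := by
    have h2 := Module.End.isNilpotent_restrict_maxGenEigenspace_sub_algebraMap u μ
    have heq : u.restrict h0 - algebraMap ℂ (Module.End ℂ (u.maxGenEigenspace μ)) μ =
        (u - algebraMap ℂ (Module.End ℂ V) μ).restrict
          (Module.End.mapsTo_maxGenEigenspace_of_comm
            (Algebra.mul_sub_algebraMap_commutes u μ) μ) := by
      ext x
      simp [LinearMap.restrict_apply, Module.algebraMap_end_apply]; rfl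
    rw [heq]
    exact h2
  exact twistaux_trace_pow_of_isNilpotent_sub _ μ hnil k

private lemma twistaux_trace_pow_eq_sum {V : Type*} [AddCommGroup V] [Module ℂ V]
    [FiniteDimensional ℂ V] (u : Module.End ℂ V)
    (hfin : {μ : ℂ | u.maxGenEigenspace μ ≠ ⊥}.Finite) (k : ℕ) :
    LinearMap.trace ℂ V (u ^ k) =
      ∑ μ ∈ hfin.toFinset, μ ^ k * (Module.finrank ℂ (u.maxGenEigenspace μ) : ℂ) := by
  classical
  have hInt : DirectSum.IsInternal (fun μ : ℂ => u.maxGenEigenspace μ) :=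
    DirectSum.isInternal_submodule_of_iSupIndep_of_iSup_eq_top
      (u.independent_maxGenEigenspace) (u.iSup_maxGenEigenspace_eq_top)
  have hmap : ∀ μ : ℂ, MapsTo (u ^ k) (u.maxGenEigenspace μ) (u.maxGenEigenspace μ) :=
    fun μ => Module.End.mapsTo_maxGenEigenspace_of_comm ((Commute.refl u).pow_right k) μ
  rw [LinearMap.trace_eq_sum_trace_restrict' hInt hfin hmap]
  exact Finset.sum_congr rfl fun μ _ => twistaux_trace_pow_restrict_maxGen u μ k (hmap μ)

private lemma twistaux_conj_trace {V : Type*} [AddCommGroup V] [Module ℂ V]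
    [FiniteDimensional ℂ V] (u : Module.End ℂ V) {n : ℕ} (hn : 0 < n) (hu : u ^ n = 1) :
    (starRingEnd ℂ) (LinearMap.trace ℂ V u) = LinearMap.trace ℂ V (u ^ (n - 1)) := by
  classical
  have hfin : {μ : ℂ | u.maxGenEigenspace μ ≠ ⊥}.Finite :=
    WellFoundedGT.finite_ne_bot_of_iSupIndep u.independent_maxGenEigenspace
  have hμn : ∀ μ ∈ hfin.toFinset, μ ^ n = 1 := by
    intro μ hμ
    rw [Set.Finite.mem_toFinset] at hμ
    have hW : Nontrivial (u.maxGenEigenspace μ) :=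
      Submodule.nontrivial_iff_ne_bot.mpr hμ
    have hd : (Module.finrank ℂ (u.maxGenEigenspace μ) : ℂ) ≠ 0 :=
      Nat.cast_ne_zero.mpr Module.finrank_pos.ne'
    have h1 := twistaux_trace_pow_restrict_maxGen u μ n
      (Module.End.mapsTo_maxGenEigenspace_of_comm ((Commute.refl u).pow_right n) μ)
    have h2 : (u ^ n).restrict
        (Module.End.mapsTo_maxGenEigenspace_of_comm ((Commute.refl u).pow_right n) μ) = 1 := by
      ext x; simp [LinearMap.restrict_apply, hu]
    rw [h2, LinearMap.trace_one] at h1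
    have h3 : μ ^ n * (Module.finrank ℂ (u.maxGenEigenspace μ) : ℂ) =
        1 * (Module.finrank ℂ (u.maxGenEigenspace μ) : ℂ) := by rw [one_mul]; exact h1.symm
    exact mul_right_cancel₀ hd h3
  have hconj : ∀ μ ∈ hfin.toFinset, (starRingEnd ℂ) μ = μ ^ (n - 1) := by
    intro μ hμ
    have habs : ‖μ‖ = 1 := by
      exact Complex.norm_eq_one_of_pow_eq_one (hμn μ hμ) hn.ne'
    have hmul : μ ^ (n - 1) * μ = 1 := by
      rw [← pow_succ, Nat.sub_add_cancel hn, hμn μ hμ]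
    have hinv : μ ^ (n - 1) = μ⁻¹ := eq_inv_of_mul_eq_one_left hmul
    rw [hinv, Complex.inv_eq_conj habs]
  have e1 : LinearMap.trace ℂ V u = LinearMap.trace ℂ V (u ^ 1) := by rw [pow_one]
  rw [e1, twistaux_trace_pow_eq_sum u hfin 1, twistaux_trace_pow_eq_sum u hfin (n - 1), map_sum]
  refine Finset.sum_congr rfl fun μ hμ => ?_
  rw [map_mul, map_natCast, pow_one, hconj μ hμ]

private lemma twistaux_conj_char {V : Type*} [AddCommGroup V] [Module ℂ V]
    [FiniteDimensional ℂ V] {K : Type*} [Group K] [Finite K]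
    (ρ : Representation ℂ K V) (x : K) :
    (starRingEnd ℂ) (LinearMap.trace ℂ V (ρ x)) = LinearMap.trace ℂ V (ρ x⁻¹) := by
  have hn : 0 < orderOf x := orderOf_pos x
  have hu : (ρ x) ^ orderOf x = 1 := by
    rw [← map_pow, pow_orderOf_eq_one, map_one]
  rw [twistaux_conj_trace (ρ x) hn hu, ← map_pow]
  congr 2
  have : x ^ (orderOf x - 1) * x = 1 := by
    rw [← pow_succ, Nat.sub_add_cancel hn, pow_orderOf_eq_one]
  exact eq_inv_of_mul_eq_one_left this

private lemma twistaux_schur_zero {G : Type*} [Group G] {V₁ V₂ : Type*}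
    [AddCommGroup V₁] [Module ℂ V₁] [AddCommGroup V₂] [Module ℂ V₂]
    (ρ₁ : Representation ℂ G V₁) (ρ₂ : Representation ℂ G V₂)
    (hirr₁ : ∀ W : Submodule ℂ V₁, (∀ g : G, ∀ w ∈ W, ρ₁ g w ∈ W) → W = ⊥ ∨ W = ⊤)
    (hirr₂ : ∀ W : Submodule ℂ V₂, (∀ g : G, ∀ w ∈ W, ρ₂ g w ∈ W) → W = ⊥ ∨ W = ⊤)
    (hne : ¬ ∃ e : V₁ ≃ₗ[ℂ] V₂, ∀ (g : G) (x : V₁), e (ρ₁ g x) = ρ₂ g (e x))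
    (T : V₂ →ₗ[ℂ] V₁) (hT : ∀ g : G, ρ₁ g ∘ₗ T = T ∘ₗ ρ₂ g) : T = 0 := by
  have hTc : ∀ (g : G) (v : V₂), ρ₁ g (T v) = T (ρ₂ g v) := by
    intro g v
    have := congrArg (fun f : V₂ →ₗ[ℂ] V₁ => f v) (hT g)
    simpa using this
  by_contra hT0
  have hker : LinearMap.ker T = ⊥ := by
    rcases hirr₂ (LinearMap.ker T) (fun g w hw => by
      rw [LinearMap.mem_ker] at hw ⊢
      rw [← hTc g w, hw, map_zero]) with h | h
    · exact h
    · exact absurd (LinearMap.ker_eq_top.mp h) hT0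
  have hrange : LinearMap.range T = ⊤ := by
    rcases hirr₁ (LinearMap.range T) (fun g w hw => by
      obtain ⟨v, rfl⟩ := hw
      exact ⟨ρ₂ g v, (hTc g v).symm⟩) with h | h
    · exact absurd (LinearMap.range_eq_bot.mp h) hT0
    · exact h
  have hbij : Function.Bijective T :=
    ⟨LinearMap.ker_eq_bot.mp hker, LinearMap.range_eq_top.mp hrange⟩
  let e' := LinearEquiv.ofBijective T hbij
  refine hne ⟨e'.symm, fun g x => ?_⟩
  apply e'.injective
  rw [e'.apply_symm_apply]
  have h1 : e' (ρ₂ g (e'.symm x)) = T (ρ₂ g (e'.symm x)) := rfl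
  rw [h1, ← hTc g (e'.symm x)]
  have h2 : T (e'.symm x) = e' (e'.symm x) := rfl
  rw [h2, e'.apply_symm_apply]

private lemma twistaux_schur_scalar {G : Type*} [Group G] {V₁ : Type*}
    [AddCommGroup V₁] [Module ℂ V₁] [FiniteDimensional ℂ V₁] [Nontrivial V₁]
    (ρ₁ : Representation ℂ G V₁)
    (hirr₁ : ∀ W : Submodule ℂ V₁, (∀ g : G, ∀ w ∈ W, ρ₁ g w ∈ W) → W = ⊥ ∨ W = ⊤)
    (T : V₁ →ₗ[ℂ] V₁) (hT : ∀ g : G, ρ₁ g ∘ₗ T = T ∘ₗ ρ₁ g) :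
    T = (LinearMap.trace ℂ V₁ T / (Module.finrank ℂ V₁ : ℂ)) • (1 : V₁ →ₗ[ℂ] V₁) := by
  have hTc : ∀ (g : G) (v : V₁), ρ₁ g (T v) = T (ρ₁ g v) := by
    intro g v
    have := congrArg (fun f : V₁ →ₗ[ℂ] V₁ => f v) (hT g)
    simpa using this
  obtain ⟨c, hc⟩ := Module.End.exists_eigenvalue (T : Module.End ℂ V₁)
  have heig : Module.End.eigenspace (T : Module.End ℂ V₁) c = ⊤ := by
    rcases hirr₁ (Module.End.eigenspace (T : Module.End ℂ V₁) c) (fun g w hw => by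
      rw [Module.End.mem_eigenspace_iff] at hw ⊢
      rw [← hTc g w, hw, map_smul]) with h | h
    · exact absurd h hc
    · exact h
  have hTc' : ∀ v : V₁, T v = c • v := by
    intro v
    have : v ∈ Module.End.eigenspace (T : Module.End ℂ V₁) c := heig ▸ Submodule.mem_top
    exact Module.End.mem_eigenspace_iff.mp this
  have hTeq : T = c • (1 : V₁ →ₗ[ℂ] V₁) := by
    ext v; simp [hTc' v]
  have htr : LinearMap.trace ℂ V₁ T = c * (Module.finrank ℂ V₁ : ℂ) := by
    rw [hTeq, map_smul, LinearMap.trace_one, smul_eq_mul]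
  have hd : (Module.finrank ℂ V₁ : ℂ) ≠ 0 := Nat.cast_ne_zero.mpr Module.finrank_pos.ne'
  rw [htr, hTeq]
  congr 1
  rw [mul_div_assoc, div_self hd, mul_one]

private lemma twistaux_sum_trace_mul_trace {V₁ V₂ : Type*}
    [AddCommGroup V₁] [Module ℂ V₁] [AddCommGroup V₂] [Module ℂ V₂]
    {ι I J : Type*} [Fintype ι] [Fintype I] [Fintype J]
    [DecidableEq I] [DecidableEq J]
    (b₁ : Basis I ℂ V₁) (b₂ : Basis J ℂ V₂)
    (A : ι → (V₁ →ₗ[ℂ] V₁)) (B : ι → (V₂ →ₗ[ℂ] V₂)) :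
    ∑ i, LinearMap.trace ℂ V₁ (A i) * LinearMap.trace ℂ V₂ (B i)
      = ∑ p : I, ∑ q : J, (LinearMap.toMatrix b₂ b₁
          (∑ i, A i ∘ₗ (Matrix.toLin b₂ b₁ (Matrix.single p q 1)) ∘ₗ B i)) p q := by
  have key : ∀ (p : I) (q : J) (i : ι),
      (LinearMap.toMatrix b₂ b₁
        (A i ∘ₗ (Matrix.toLin b₂ b₁ (Matrix.single p q 1)) ∘ₗ B i)) p q
      = (LinearMap.toMatrix b₁ b₁ (A i)) p p * (LinearMap.toMatrix b₂ b₂ (B i)) q q := by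
    intro p q i
    rw [LinearMap.toMatrix_comp b₂ b₁ b₁, LinearMap.toMatrix_comp b₂ b₂ b₁,
      LinearMap.toMatrix_toLin]
    simp [Matrix.mul_apply, Matrix.single, ite_and]
  have rhs : ∀ (p : I) (q : J), (LinearMap.toMatrix b₂ b₁
          (∑ i, A i ∘ₗ (Matrix.toLin b₂ b₁ (Matrix.single p q 1)) ∘ₗ B i)) p q
      = ∑ i, (LinearMap.toMatrix b₁ b₁ (A i)) p p * (LinearMap.toMatrix b₂ b₂ (B i)) q q := by
    intro p q
    rw [map_sum, Matrix.sum_apply]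
    exact Finset.sum_congr rfl fun i _ => key p q i
  simp only [rhs]
  have lhs : ∀ i : ι, LinearMap.trace ℂ V₁ (A i) * LinearMap.trace ℂ V₂ (B i)
      = ∑ p : I, ∑ q : J, (LinearMap.toMatrix b₁ b₁ (A i)) p p
          * (LinearMap.toMatrix b₂ b₂ (B i)) q q := by
    intro i
    rw [LinearMap.trace_eq_matrix_trace ℂ b₁, LinearMap.trace_eq_matrix_trace ℂ b₂,
      Matrix.trace, Matrix.trace, Finset.sum_mul_sum]
    rfl
  simp only [lhs]
  rw [Finset.sum_comm]
  exact Finset.sum_congr rfl fun p _ => Finset.sum_comm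

private lemma twistaux_Tcomm {G K V W : Type*} [Group G] [Fintype G] [Group K]
    [AddCommGroup V] [Module ℂ V] [AddCommGroup W] [Module ℂ W]
    (ι : G →* K) (x : G → K) (hx : ∀ h g : G, ι h * x g = x (h * g))
    (ρ' : Representation ℂ K V) (τ' : Representation ℂ K W) (f : W →ₗ[ℂ] V) (h : G) :
    (ρ' (ι h)) ∘ₗ (∑ g : G, ρ' (x g) ∘ₗ f ∘ₗ τ' ((x g)⁻¹)) =
      (∑ g : G, ρ' (x g) ∘ₗ f ∘ₗ τ' ((x g)⁻¹)) ∘ₗ (τ' (ι h)) := by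
  have hx' : ∀ h g : G, (x g)⁻¹ * ι h = (x (h⁻¹ * g))⁻¹ := by
    intro h g
    rw [← hx h⁻¹ g, mul_inv_rev, map_inv, inv_inv]
  ext v
  simp only [LinearMap.comp_apply, LinearMap.sum_apply, LinearMap.comp_apply, map_sum]
  have lhs : ∀ g : G, ρ' (ι h) (ρ' (x g) (f (τ' ((x g)⁻¹) v)))
      = ρ' (x (h * g)) (f (τ' ((x g)⁻¹) v)) := by
    intro g
    rw [← LinearMap.comp_apply (ρ' (ι h)), ← Module.End.mul_eq_comp, ← map_mul, hx]
  have rhs : ∀ g : G, ρ' (x g) (f (τ' ((x g)⁻¹) (τ' (ι h) v)))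
      = ρ' (x g) (f (τ' ((x (h⁻¹ * g))⁻¹) v)) := by
    intro g
    rw [← LinearMap.comp_apply (τ' ((x g)⁻¹)), ← Module.End.mul_eq_comp, ← map_mul, hx']
  simp only [lhs, rhs]
  apply Fintype.sum_equiv (Equiv.mulLeft h)
  intro g
  simp [Equiv.coe_mulLeft]

end Aux

/-- Twisted orthogonality for a finite group `G` with `σ ∈ Aut(G)` of
order `m`.  For σ-fixed irreducibles `ρ₁, ρ₂` with chosen extensions `ρ̃₁, ρ̃₂` to
`G̃ = G ⋊ ⟨σ⟩`, the twisted characters `χ̃ᵢ(g) = χ_{ρ̃ᵢ}(g, σ)` satisfy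
`(1/|G|) ∑_g χ̃₁(g)·conj(χ̃₂(g)) = 0` if `ρ₁ ≇ ρ₂`, and `= 1` if the extensions are
isomorphic (the compatible choice in the case `ρ₁ ≅ ρ₂`). -/
theorem twisted_orthogonality_finite_group
    {G : Type*} [Group G] [Fintype G]
    {m : ℕ} (hm : 0 < m) (σ : MulAut G) (hσ : orderOf σ = m)
    {V₁ V₂ : Type*}
    [AddCommGroup V₁] [Module ℂ V₁] [FiniteDimensional ℂ V₁] [Nontrivial V₁]
    [AddCommGroup V₂] [Module ℂ V₂] [FiniteDimensional ℂ V₂] [Nontrivial V₂]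
    (ρ₁ : Representation ℂ G V₁) (ρ₂ : Representation ℂ G V₂)
    (hirr₁ : ∀ W : Submodule ℂ V₁, (∀ g : G, ∀ w ∈ W, ρ₁ g w ∈ W) → W = ⊥ ∨ W = ⊤)
    (hirr₂ : ∀ W : Submodule ℂ V₂, (∀ g : G, ∀ w ∈ W, ρ₂ g w ∈ W) → W = ⊥ ∨ W = ⊤)
    (ρ₁' : Representation ℂ (G ⋊[(Subgroup.zpowers σ).subtype] ↥(Subgroup.zpowers σ)) V₁)
    (ρ₂' : Representation ℂ (G ⋊[(Subgroup.zpowers σ).subtype] ↥(Subgroup.zpowers σ)) V₂)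
    (hext₁ : ∀ g : G, ρ₁' (SemidirectProduct.inl g) = ρ₁ g)
    (hext₂ : ∀ g : G, ρ₂' (SemidirectProduct.inl g) = ρ₂ g) :
    ((¬ ∃ e : V₁ ≃ₗ[ℂ] V₂, ∀ (g : G) (x : V₁), e (ρ₁ g x) = ρ₂ g (e x)) →
      (1 / (Fintype.card G : ℂ)) * ∑ g : G,
        (LinearMap.trace ℂ V₁
          (ρ₁' (SemidirectProduct.inl g *
            SemidirectProduct.inr ⟨σ, Subgroup.mem_zpowers σ⟩))) *
        starRingEnd ℂ (LinearMap.trace ℂ V₂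
          (ρ₂' (SemidirectProduct.inl g *
            SemidirectProduct.inr ⟨σ, Subgroup.mem_zpowers σ⟩))) = 0) ∧
    ((∃ e : V₁ ≃ₗ[ℂ] V₂,
        ∀ (x : G ⋊[(Subgroup.zpowers σ).subtype] ↥(Subgroup.zpowers σ)) (y : V₁),
          e (ρ₁' x y) = ρ₂' x (e y)) →
      (1 / (Fintype.card G : ℂ)) * ∑ g : G,
        (LinearMap.trace ℂ V₁
          (ρ₁' (SemidirectProduct.inl g *
            SemidirectProduct.inr ⟨σ, Subgroup.mem_zpowers σ⟩))) *
        starRingEnd ℂ (LinearMap.trace ℂ V₂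
          (ρ₂' (SemidirectProduct.inl g *
            SemidirectProduct.inr ⟨σ, Subgroup.mem_zpowers σ⟩))) = 1) := by
  classical
  haveI : Finite ↥(Subgroup.zpowers σ) := by
    have hfo : IsOfFinOrder σ := by
      rw [← orderOf_pos_iff, hσ]; exact hm
    exact hfo.finite_zpowers.to_subtype
  haveI : Finite (G ⋊[(Subgroup.zpowers σ).subtype] ↥(Subgroup.zpowers σ)) :=
    Finite.of_injective
      (fun k : (G ⋊[(Subgroup.zpowers σ).subtype] ↥(Subgroup.zpowers σ)) => (k.left, k.right))
      (by
        intro a b hab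
        obtain ⟨h1, h2⟩ := Prod.ext_iff.mp hab
        exact SemidirectProduct.ext h1 h2)
  -- notation
  have hx : ∀ h g : G,
      SemidirectProduct.inl (φ := (Subgroup.zpowers σ).subtype) h *
        (SemidirectProduct.inl g * SemidirectProduct.inr ⟨σ, Subgroup.mem_zpowers σ⟩) =
      SemidirectProduct.inl (h * g) * SemidirectProduct.inr ⟨σ, Subgroup.mem_zpowers σ⟩ := by
    intro h g
    rw [← mul_assoc, ← map_mul]
  constructor
  · -- non-isomorphic case
    intro hne
    have hT0 : ∀ f : V₂ →ₗ[ℂ] V₁,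
        (∑ g : G, ρ₁' (SemidirectProduct.inl g *
            SemidirectProduct.inr ⟨σ, Subgroup.mem_zpowers σ⟩) ∘ₗ f ∘ₗ
          ρ₂' ((SemidirectProduct.inl g *
            SemidirectProduct.inr ⟨σ, Subgroup.mem_zpowers σ⟩)⁻¹)) = 0 := by
      intro f
      apply twistaux_schur_zero ρ₁ ρ₂ hirr₁ hirr₂ hne
      intro h
      have hc := twistaux_Tcomm (SemidirectProduct.inl (φ := (Subgroup.zpowers σ).subtype))
        (fun g => SemidirectProduct.inl g * SemidirectProduct.inr ⟨σ, Subgroup.mem_zpowers σ⟩)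
        hx ρ₁' ρ₂' f h
      rwa [hext₁ h, hext₂ h] at hc
    have hconj : ∀ g : G,
        starRingEnd ℂ (LinearMap.trace ℂ V₂ (ρ₂' (SemidirectProduct.inl g *
            SemidirectProduct.inr ⟨σ, Subgroup.mem_zpowers σ⟩))) =
        LinearMap.trace ℂ V₂ (ρ₂' ((SemidirectProduct.inl g *
            SemidirectProduct.inr ⟨σ, Subgroup.mem_zpowers σ⟩)⁻¹)) :=
      fun g => twistaux_conj_char ρ₂' _
    have hsum : (∑ g : G,
        (LinearMap.trace ℂ V₁ (ρ₁' (SemidirectProduct.inl g *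
            SemidirectProduct.inr ⟨σ, Subgroup.mem_zpowers σ⟩))) *
        starRingEnd ℂ (LinearMap.trace ℂ V₂ (ρ₂' (SemidirectProduct.inl g *
            SemidirectProduct.inr ⟨σ, Subgroup.mem_zpowers σ⟩)))) = 0 := by
      have e1 : (∑ g : G,
          (LinearMap.trace ℂ V₁ (ρ₁' (SemidirectProduct.inl g *
              SemidirectProduct.inr ⟨σ, Subgroup.mem_zpowers σ⟩))) *
          starRingEnd ℂ (LinearMap.trace ℂ V₂ (ρ₂' (SemidirectProduct.inl g *
              SemidirectProduct.inr ⟨σ, Subgroup.mem_zpowers σ⟩)))) =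
          ∑ g : G,
          (LinearMap.trace ℂ V₁ (ρ₁' (SemidirectProduct.inl g *
              SemidirectProduct.inr ⟨σ, Subgroup.mem_zpowers σ⟩))) *
          (LinearMap.trace ℂ V₂ (ρ₂' ((SemidirectProduct.inl g *
              SemidirectProduct.inr ⟨σ, Subgroup.mem_zpowers σ⟩)⁻¹))) :=
        Finset.sum_congr rfl fun g _ => by rw [hconj g]
      rw [e1]
      have e2 := twistaux_sum_trace_mul_trace (Module.finBasis ℂ V₁) (Module.finBasis ℂ V₂)
        (fun g : G => ρ₁' (SemidirectProduct.inl g *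
            SemidirectProduct.inr ⟨σ, Subgroup.mem_zpowers σ⟩))
        (fun g : G => ρ₂' ((SemidirectProduct.inl g *
            SemidirectProduct.inr ⟨σ, Subgroup.mem_zpowers σ⟩)⁻¹))
      refine e2.trans ?_
      refine Finset.sum_eq_zero fun p _ => Finset.sum_eq_zero fun q _ => ?_
      rw [hT0 _]
      simp
    rw [hsum, mul_zero]
  · -- isomorphic case
    rintro ⟨e, he⟩
    have hcard : (Fintype.card G : ℂ) ≠ 0 := Nat.cast_ne_zero.mpr Fintype.card_ne_zero
    have hd : (Module.finrank ℂ V₁ : ℂ) ≠ 0 := Nat.cast_ne_zero.mpr Module.finrank_pos.ne'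
    have hch2 : ∀ y : (G ⋊[(Subgroup.zpowers σ).subtype] ↥(Subgroup.zpowers σ)),
        LinearMap.trace ℂ V₂ (ρ₂' y) = LinearMap.trace ℂ V₁ (ρ₁' y) := by
      intro y
      have hcy : ρ₂' y = (e.conj (ρ₁' y) : V₂ →ₗ[ℂ] V₂) := by
        ext v
        rw [LinearEquiv.conj_apply]
        simp only [LinearMap.comp_apply, LinearEquiv.coe_coe]
        rw [he y (e.symm v), e.apply_symm_apply]
      rw [hcy, LinearMap.trace_conj']
    have hconj : ∀ g : G,
        starRingEnd ℂ (LinearMap.trace ℂ V₂ (ρ₂' (SemidirectProduct.inl g *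
            SemidirectProduct.inr ⟨σ, Subgroup.mem_zpowers σ⟩))) =
        LinearMap.trace ℂ V₁ (ρ₁' ((SemidirectProduct.inl g *
            SemidirectProduct.inr ⟨σ, Subgroup.mem_zpowers σ⟩)⁻¹)) := by
      intro g
      rw [hch2, twistaux_conj_char ρ₁' _]
    have hcommT : ∀ (f : V₁ →ₗ[ℂ] V₁) (h : G),
        ρ₁ h ∘ₗ (∑ g : G, ρ₁' (SemidirectProduct.inl g *
            SemidirectProduct.inr ⟨σ, Subgroup.mem_zpowers σ⟩) ∘ₗ f ∘ₗ
          ρ₁' ((SemidirectProduct.inl g *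
            SemidirectProduct.inr ⟨σ, Subgroup.mem_zpowers σ⟩)⁻¹)) =
        (∑ g : G, ρ₁' (SemidirectProduct.inl g *
            SemidirectProduct.inr ⟨σ, Subgroup.mem_zpowers σ⟩) ∘ₗ f ∘ₗ
          ρ₁' ((SemidirectProduct.inl g *
            SemidirectProduct.inr ⟨σ, Subgroup.mem_zpowers σ⟩)⁻¹)) ∘ₗ ρ₁ h := by
      intro f h
      have hc := twistaux_Tcomm (SemidirectProduct.inl (φ := (Subgroup.zpowers σ).subtype))
        (fun g => SemidirectProduct.inl g * SemidirectProduct.inr ⟨σ, Subgroup.mem_zpowers σ⟩)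
        hx ρ₁' ρ₁' f h
      rwa [hext₁ h] at hc
    have htrT : ∀ f : V₁ →ₗ[ℂ] V₁,
        LinearMap.trace ℂ V₁ (∑ g : G, ρ₁' (SemidirectProduct.inl g *
            SemidirectProduct.inr ⟨σ, Subgroup.mem_zpowers σ⟩) ∘ₗ f ∘ₗ
          ρ₁' ((SemidirectProduct.inl g *
            SemidirectProduct.inr ⟨σ, Subgroup.mem_zpowers σ⟩)⁻¹)) =
        (Fintype.card G : ℂ) * LinearMap.trace ℂ V₁ f := by
      intro f
      rw [map_sum]
      have hone : ∀ g : G, LinearMap.trace ℂ V₁ (ρ₁' (SemidirectProduct.inl g *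
            SemidirectProduct.inr ⟨σ, Subgroup.mem_zpowers σ⟩) ∘ₗ f ∘ₗ
          ρ₁' ((SemidirectProduct.inl g *
            SemidirectProduct.inr ⟨σ, Subgroup.mem_zpowers σ⟩)⁻¹)) =
          LinearMap.trace ℂ V₁ f := by
        intro g
        rw [← Module.End.mul_eq_comp, ← Module.End.mul_eq_comp, LinearMap.trace_mul_comm,
          mul_assoc, ← map_mul, inv_mul_cancel, map_one, mul_one]
      rw [Finset.sum_congr rfl fun g _ => hone g, Finset.sum_const, Finset.card_univ,
        nsmul_eq_mul]
    have hTeq : ∀ f : V₁ →ₗ[ℂ] V₁,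
        (∑ g : G, ρ₁' (SemidirectProduct.inl g *
            SemidirectProduct.inr ⟨σ, Subgroup.mem_zpowers σ⟩) ∘ₗ f ∘ₗ
          ρ₁' ((SemidirectProduct.inl g *
            SemidirectProduct.inr ⟨σ, Subgroup.mem_zpowers σ⟩)⁻¹)) =
        (((Fintype.card G : ℂ) * LinearMap.trace ℂ V₁ f) / (Module.finrank ℂ V₁ : ℂ)) •
          (1 : V₁ →ₗ[ℂ] V₁) := by
      intro f
      have h1 := twistaux_schur_scalar ρ₁ hirr₁ _ (hcommT f)
      rwa [htrT f] at h1
    have htrE : ∀ p q : Fin (Module.finrank ℂ V₁),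
        LinearMap.trace ℂ V₁ (Matrix.toLin (Module.finBasis ℂ V₁) (Module.finBasis ℂ V₁)
          (Matrix.single p q 1)) = if p = q then 1 else 0 := by
      intro p q
      rw [LinearMap.trace_eq_matrix_trace ℂ (Module.finBasis ℂ V₁), LinearMap.toMatrix_toLin]
      by_cases hpq : p = q
      · subst hpq
        rw [Matrix.trace_single_eq_same, if_pos rfl]
      · rw [Matrix.trace_single_eq_of_ne p q (1 : ℂ) hpq, if_neg hpq]
    have hentry : ∀ p q : Fin (Module.finrank ℂ V₁),
        (LinearMap.toMatrix (Module.finBasis ℂ V₁) (Module.finBasis ℂ V₁)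
          (∑ g : G, ρ₁' (SemidirectProduct.inl g *
            SemidirectProduct.inr ⟨σ, Subgroup.mem_zpowers σ⟩) ∘ₗ
          (Matrix.toLin (Module.finBasis ℂ V₁) (Module.finBasis ℂ V₁)
            (Matrix.single p q 1)) ∘ₗ
          ρ₁' ((SemidirectProduct.inl g *
            SemidirectProduct.inr ⟨σ, Subgroup.mem_zpowers σ⟩)⁻¹))) p q =
        if p = q then (Fintype.card G : ℂ) / (Module.finrank ℂ V₁ : ℂ) else 0 := by
      intro p q
      rw [hTeq _, map_smul, LinearMap.toMatrix_one, Matrix.smul_apply, Matrix.one_apply,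
        htrE p q]
      by_cases hpq : p = q
      · simp [hpq]
      · simp [hpq]
    have hsum : (∑ g : G,
        (LinearMap.trace ℂ V₁ (ρ₁' (SemidirectProduct.inl g *
            SemidirectProduct.inr ⟨σ, Subgroup.mem_zpowers σ⟩))) *
        starRingEnd ℂ (LinearMap.trace ℂ V₂ (ρ₂' (SemidirectProduct.inl g *
            SemidirectProduct.inr ⟨σ, Subgroup.mem_zpowers σ⟩)))) = (Fintype.card G : ℂ) := by
      have e1 : (∑ g : G,
          (LinearMap.trace ℂ V₁ (ρ₁' (SemidirectProduct.inl g *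
              SemidirectProduct.inr ⟨σ, Subgroup.mem_zpowers σ⟩))) *
          starRingEnd ℂ (LinearMap.trace ℂ V₂ (ρ₂' (SemidirectProduct.inl g *
              SemidirectProduct.inr ⟨σ, Subgroup.mem_zpowers σ⟩)))) =
          ∑ g : G,
          (LinearMap.trace ℂ V₁ (ρ₁' (SemidirectProduct.inl g *
              SemidirectProduct.inr ⟨σ, Subgroup.mem_zpowers σ⟩))) *
          (LinearMap.trace ℂ V₁ (ρ₁' ((SemidirectProduct.inl g *
              SemidirectProduct.inr ⟨σ, Subgroup.mem_zpowers σ⟩)⁻¹))) :=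
        Finset.sum_congr rfl fun g _ => by rw [hconj g]
      rw [e1]
      have e2 := twistaux_sum_trace_mul_trace (Module.finBasis ℂ V₁) (Module.finBasis ℂ V₁)
        (fun g : G => ρ₁' (SemidirectProduct.inl g *
            SemidirectProduct.inr ⟨σ, Subgroup.mem_zpowers σ⟩))
        (fun g : G => ρ₁' ((SemidirectProduct.inl g *
            SemidirectProduct.inr ⟨σ, Subgroup.mem_zpowers σ⟩)⁻¹))
      refine e2.trans ?_
      have e3 : ∀ p : Fin (Module.finrank ℂ V₁),
          (∑ q : Fin (Module.finrank ℂ V₁),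
            (LinearMap.toMatrix (Module.finBasis ℂ V₁) (Module.finBasis ℂ V₁)
              (∑ g : G, ρ₁' (SemidirectProduct.inl g *
                SemidirectProduct.inr ⟨σ, Subgroup.mem_zpowers σ⟩) ∘ₗ
              (Matrix.toLin (Module.finBasis ℂ V₁) (Module.finBasis ℂ V₁)
                (Matrix.single p q 1)) ∘ₗ
              ρ₁' ((SemidirectProduct.inl g *
                SemidirectProduct.inr ⟨σ, Subgroup.mem_zpowers σ⟩)⁻¹))) p q) =
          (Fintype.card G : ℂ) / (Module.finrank ℂ V₁ : ℂ) := by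
        intro p
        rw [Finset.sum_congr rfl fun q _ => hentry p q]
        simp
      rw [Finset.sum_congr rfl fun p _ => e3 p, Finset.sum_const, Finset.card_univ,
        Fintype.card_fin, nsmul_eq_mul]
      field_simp
    rw [hsum, one_div, inv_mul_cancel₀ hcard]
end

section
/- Let A be a ℤ/mℤ-graded Frobenius ⋆-algebra with symmetric bimodule isomorphism φ: A → A*, φ(a) = λ(−·a). Then φ⁻¹ maps the space of twisted class functionals cf_{A₀}(A₁) = {γ ∈ A₁* : γ(am) = γ(ma) for all a ∈ A₀, m ∈ A₁} (extended by zero to A) bijectively onto the centralizer Z_{A₀}(A_{−1}) = {x ∈ A_{−1} : xb = bx for all b ∈ A₀}. -/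
/-- Let `A` be a `ℤ/mℤ`-graded Frobenius ⋆-algebra with symmetric
bimodule isomorphism `φ : A ≃ A*`, `φ(a) = λ(—·a)`.  Then `φ⁻¹` maps the space of
twisted class functionals on `A₁` (functionals on `A` vanishing in degrees `≠ 1` with
`γ(a·x) = γ(x·a)` for `a ∈ A₀`) bijectively onto the centralizer
`Z_{A₀}(A_{−1}) = {z ∈ A_{−1} : z·b = b·z for all b ∈ A₀}`. -/
theorem graded_frobenius_star_twisted_class_functionals
    {A : Type*} [Ring A] [Algebra ℂ A] [FiniteDimensional ℂ A]
    {m : ℕ} [NeZero m]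
    (𝒜 : ZMod m → Submodule ℂ A) [GradedRing 𝒜]
    (st : A → A)
    (hadd : ∀ a b : A, st (a + b) = st a + st b)
    (hinv : ∀ a : A, st (st a) = a)
    (hmul : ∀ a b : A, st (a * b) = st b * st a)
    (hsmul : ∀ (c : ℂ) (a : A), st (c • a) = (starRingEnd ℂ c) • st a)
    (hstgr : ∀ r : ZMod m, ∀ a ∈ 𝒜 r, st a ∈ 𝒜 (-r))
    (l : A →ₗ[ℂ] ℂ)
    (hl0 : ∀ r : ZMod m, r ≠ 0 → ∀ a ∈ 𝒜 r, l a = 0)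
    (hclass0 : ∀ a ∈ 𝒜 0, ∀ b ∈ 𝒜 0, l (a * b) = l (b * a))
    (hherm : ∀ a b : A, l (b * st a) = starRingEnd ℂ (l (a * st b)))
    (hpos : ∀ a : A, a ≠ 0 → 0 < (l (a * st a)).re)
    (φ : A ≃ₗ[ℂ] Module.Dual ℂ A)
    (hφ : ∀ a x : A, φ a x = l (x * a)) :
    φ.symm '' {γ : Module.Dual ℂ A |
        (∀ r : ZMod m, r ≠ 1 → ∀ x ∈ 𝒜 r, γ x = 0) ∧
        (∀ a ∈ 𝒜 0, ∀ x : A, γ (a * x) = γ (x * a))} =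
      {z : A | z ∈ 𝒜 (-1) ∧ ∀ b ∈ 𝒜 0, z * b = b * z} := by
  classical
  -- star of zero, injectivity facts
  have hst0 : st 0 = 0 := by
    have h := hadd 0 0
    rw [add_zero] at h
    exact (left_eq_add.mp h)
  have hstne : ∀ a : A, a ≠ 0 → st a ≠ 0 := by
    intro a ha h
    exact ha (by rw [← hinv a, h, hst0])
  -- nondegeneracy of the pairing (x, w) ↦ l (x * w)
  have hnd : ∀ w : A, (∀ x : A, l (x * w) = 0) → w = 0 := by
    intro w hw
    by_contra h
    have h1 := hpos (st w) (hstne w h)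
    rw [hinv] at h1
    rw [hw (st w)] at h1
    simp at h1
  -- trace property against degree-0 elements
  have htr : ∀ b ∈ 𝒜 0, ∀ w : A, l (b * w) = l (w * b) := by
    intro b hb w
    refine DirectSum.Decomposition.inductionOn 𝒜 (motive := fun w => l (b * w) = l (w * b)) ?_ ?_ ?_ w
    · simp
    · intro i x
      by_cases hi : i = 0
      · subst hi
        exact hclass0 b hb x x.2
      · have h1 : (b * (x : A)) ∈ 𝒜 i := by
          simpa using SetLike.mul_mem_graded hb x.2
        have h2 : ((x : A) * b) ∈ 𝒜 i := by
          simpa using SetLike.mul_mem_graded x.2 hb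
        rw [hl0 i hi _ h1, hl0 i hi _ h2]
    · intro x y hx hy
      rw [mul_add, add_mul, map_add, map_add, hx, hy]
  -- component extraction on the right
  have hcompR : ∀ (r : ZMod m) (x : A), x ∈ 𝒜 r → ∀ y : A,
      l (x * y) = l (x * (DirectSum.decompose 𝒜 y (-r) : A)) := by
    intro r x hx y
    refine DirectSum.Decomposition.inductionOn 𝒜
      (motive := fun y => l (x * y) = l (x * (DirectSum.decompose 𝒜 y (-r) : A))) ?_ ?_ ?_ y
    · simp
    · intro i z
      by_cases hi : i = -r
      · subst hi
        rw [DirectSum.decompose_of_mem_same 𝒜 z.2]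
      · have h1 : (x * (z : A)) ∈ 𝒜 (r + i) := SetLike.mul_mem_graded hx z.2
        have hri : r + i ≠ 0 := by
          intro h; exact hi (by linear_combination h)
        rw [hl0 _ hri _ h1, DirectSum.decompose_of_mem_ne 𝒜 z.2 hi]
        simp
    · intro a b ha hb
      rw [mul_add, map_add, ha, hb, DirectSum.decompose_add]
      simp [mul_add, DirectSum.add_apply]
  -- component extraction on the left
  have hcompL : ∀ (s : ZMod m) (y : A), y ∈ 𝒜 s → ∀ x : A,
      l (x * y) = l ((DirectSum.decompose 𝒜 x (-s) : A) * y) := by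
    intro s y hy x
    refine DirectSum.Decomposition.inductionOn 𝒜
      (motive := fun x => l (x * y) = l ((DirectSum.decompose 𝒜 x (-s) : A) * y)) ?_ ?_ ?_ x
    · simp
    · intro i z
      by_cases hi : i = -s
      · subst hi
        rw [DirectSum.decompose_of_mem_same 𝒜 z.2]
      · have h1 : ((z : A) * y) ∈ 𝒜 (i + s) := SetLike.mul_mem_graded z.2 hy
        have hri : i + s ≠ 0 := by
          intro h; exact hi (by linear_combination h)
        rw [hl0 _ hri _ h1, DirectSum.decompose_of_mem_ne 𝒜 z.2 hi]
        simp
    · intro a b ha hb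
      rw [add_mul, map_add, ha, hb, DirectSum.decompose_add]
      simp [add_mul, DirectSum.add_apply]
  ext z
  simp only [Set.mem_image, Set.mem_setOf_eq]
  constructor
  · rintro ⟨γ, ⟨hγ1, hγ2⟩, rfl⟩
    set w := φ.symm γ with hw
    have hγφ : ∀ x : A, γ x = l (x * w) := by
      intro x
      conv_lhs => rw [← φ.apply_symm_apply γ]
      exact hφ _ _
    -- components of w away from -1 vanish
    have hzero : ∀ s : ZMod m, s ≠ -1 → (DirectSum.decompose 𝒜 w s : A) = 0 := by
      intro s hs
      apply hnd
      intro x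
      have hws : (DirectSum.decompose 𝒜 w s : A) ∈ 𝒜 s := SetLike.coe_mem _
      rw [hcompL s _ hws x]
      have hx' : (DirectSum.decompose 𝒜 x (-s) : A) ∈ 𝒜 (-s) := SetLike.coe_mem _
      have e1 : l ((DirectSum.decompose 𝒜 x (-s) : A) * w)
          = l ((DirectSum.decompose 𝒜 x (-s) : A) * (DirectSum.decompose 𝒜 w s : A)) := by
        have h := hcompR (-s) _ hx' w
        rw [neg_neg] at h
        exact h
      rw [← e1]
      have hns : -s ≠ 1 := by
        intro h; exact hs (by rw [← h, neg_neg])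
      have := hγ1 (-s) hns _ hx'
      rw [hγφ] at this
      exact this
    constructor
    · -- w ∈ 𝒜 (-1)
      rw [← DirectSum.sum_support_decompose 𝒜 w]
      refine Submodule.sum_mem _ ?_
      intro i _
      by_cases hi : i = -1
      · subst hi; exact SetLike.coe_mem _
      · rw [hzero i hi]; exact Submodule.zero_mem _
    · -- w commutes with degree-0 elements
      intro b hb
      have key : ∀ x : A, l (x * (w * b - b * w)) = 0 := by
        intro x
        have h1 : l (b * (x * w)) = l ((x * w) * b) := htr b hb (x * w)
        have h2 := hγ2 b hb x
        rw [hγφ, hγφ] at h2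
        have h2' : l (b * (x * w)) = l (x * (b * w)) := by
          rw [← mul_assoc, ← mul_assoc]
          exact h2
        rw [mul_sub, map_sub, ← mul_assoc, ← h2', h1, mul_assoc, sub_self]
      have := hnd _ key
      rw [sub_eq_zero] at this
      exact this
  · rintro ⟨hz1, hz2⟩
    refine ⟨φ z, ⟨?_, ?_⟩, φ.symm_apply_apply z⟩
    · intro r hr x hx
      rw [hφ]
      have h1 : x * z ∈ 𝒜 (r + (-1)) := SetLike.mul_mem_graded hx hz1
      have h2 : r + (-1) ≠ 0 := by
        intro h; exact hr (by linear_combination h)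
      exact hl0 _ h2 _ h1
    · intro a ha x
      rw [hφ, hφ]
      rw [mul_assoc, htr a ha (x * z), mul_assoc, mul_assoc, hz2 a ha]
end
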